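/- arXiv:1002.0145 — 5 statements merged into one kernel-verified Lean document; each statement's English description precedes it below -/
import Mathlib

section
/- Let F be any field and let k ≥ 2. If S is an SG_k-closed set of vectors in F^n whose rank r satisfies r ≥ 9k, then |S| ≥ 2^{r/(9k)}. -/
open MvPolynomial

noncomputable section

namespace SGAux
open Submodule
universe u v
section Aux
variable {F : Type u} [Field F] {V : Type v} [AddCommGroup V] [Module F V]

lemma ncard_inter_span_eq_card_filter (S : Finset V) (W : Submodule F V)
    [DecidablePred (fun v : V => v ∈ W)] :
    ((S : Set V) ∩ (W : Set V)).ncard = (S.filter (fun v => v ∈ W)).card := by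
  classical
  rw [← Set.ncard_coe_finset (S.filter (fun v => v ∈ W))]
  congr 1
  ext v
  simp

/-- choose projective representatives -/
lemma exists_projective_reps (T : Finset V) (h0 : ∀ t ∈ T, t ≠ (0:V)) :
    ∃ X : Finset V, X ⊆ T ∧
      (∀ x ∈ X, ∀ y ∈ X, ∀ c : F, y = c • x → y = x) ∧
      (∀ t ∈ T, ∃ x ∈ X, ∃ c : F, c ≠ 0 ∧ t = c • x) := by
  classical
  induction T using Finset.strongInduction with
  | _ T ih =>
    rcases T.eq_empty_or_nonempty with rfl | ⟨t₀, ht₀⟩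
    · exact ⟨∅, by simp, by simp, by simp⟩
    · set T' := T.filter (fun y => ¬ ∃ c : F, c ≠ 0 ∧ y = c • t₀) with hT'
      have htT' : t₀ ∉ T' := by
        simp only [hT', Finset.mem_filter, not_and, not_not]
        intro _
        exact ⟨1, one_ne_zero, (one_smul F t₀).symm⟩
      have hss : T' ⊂ T := Finset.ssubset_iff_of_subset (Finset.filter_subset _ _) |>.mpr ⟨t₀, ht₀, htT'⟩
      obtain ⟨X, hXsub, hXmf, hXcov⟩ := ih T' hss (fun y hy => h0 y (Finset.filter_subset _ _ hy))
      have htX : t₀ ∉ X := fun h => htT' (hXsub h)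
      refine ⟨insert t₀ X, ?_, ?_, ?_⟩
      · intro x hx
        rcases Finset.mem_insert.mp hx with h | hx
        · exact h ▸ ht₀
        · exact Finset.filter_subset _ _ (hXsub hx)
      · intro x hx y hy c hyx
        rcases Finset.mem_insert.mp hx with hx1 | hx2 <;> rcases Finset.mem_insert.mp hy with hy1 | hy2
        · rw [hy1, hx1]
        · -- y ∈ X, x = t₀ : y = c • t₀ contradiction with y ∈ T'
          exfalso
          have hy0 : y ≠ 0 := h0 y (Finset.filter_subset _ _ (hXsub hy2))
          have hc : c ≠ 0 := by rintro rfl; exact hy0 (by simpa using hyx)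
          exact (Finset.mem_filter.mp (hXsub hy2)).2 ⟨c, hc, hx1 ▸ hyx⟩
        · -- x ∈ X, y = t₀ : t₀ = c • x so x = c⁻¹ • t₀, contradiction with x ∈ T'
          exfalso
          have ht0 : (t₀ : V) ≠ 0 := h0 t₀ ht₀
          have hc : c ≠ 0 := by
            rintro rfl
            exact ht0 (by rw [← hy1]; simpa using hyx)
          have hx' : x = c⁻¹ • t₀ := by
            rw [← hy1, hyx, smul_smul, inv_mul_cancel₀ hc, one_smul]
          exact (Finset.mem_filter.mp (hXsub hx2)).2 ⟨c⁻¹, inv_ne_zero hc, hx'⟩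
        · exact hXmf x hx2 y hy2 c hyx
      · intro s hs
        by_cases hpar : ∃ c : F, c ≠ 0 ∧ s = c • t₀
        · obtain ⟨c, hc, hsc⟩ := hpar
          exact ⟨t₀, Finset.mem_insert_self _ _, c, hc, hsc⟩
        · have hsT' : s ∈ T' := Finset.mem_filter.mpr ⟨hs, hpar⟩
          obtain ⟨x, hx, c, hc, hsc⟩ := hXcov s hsT'
          exact ⟨x, Finset.mem_insert_of_mem hx, c, hc, hsc⟩


def GoodSet (F : Type u) [Field F] {W : Type v} [AddCommGroup W] [Module F W]
    (k : ℕ) (S : Finset W) : Prop :=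
  (∀ v ∈ S, v ≠ 0) ∧ (∀ v ∈ S, ∀ w ∈ S, ∀ c : F, w = c • v → w = v) ∧
    ∀ T : Finset W, T ⊆ S → T.card = k →
      LinearIndependent F (fun v : (T : Set W) => (v : W)) →
      k + 1 ≤ ((S : Set W) ∩ (Submodule.span F (T : Set W) : Set W)).ncard

lemma halving_step (k : ℕ) (hk : 2 ≤ k) (S : Finset V) (hS : GoodSet F k S)
    (V₀ : Finset V) (hV₀S : V₀ ⊆ S) (hV₀c : V₀.card = k - 1)
    (hV₀ind : LinearIndependent F (fun v : (V₀ : Set V) => (v : V)))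
    (hlight : ((S : Set V) ∩ (span F (V₀ : Set V) : Set V)).ncard ≤ k - 1) :
    ∃ (Q : Type v) (_ : AddCommGroup Q) (_ : Module F Q) (X : Finset Q),
      GoodSet F k X ∧ 2 * X.card + 1 ≤ S.card ∧
      Module.finrank F (span F (S : Set V)) ≤
        (k - 1) + Module.finrank F (span F (X : Set Q)) := by
  classical
  obtain ⟨hS0, hSmf, hSsg⟩ := hS
  set U₀ : Submodule F V := span F (V₀ : Set V) with hU₀
  set π : V →ₗ[F] (V ⧸ U₀) := U₀.mkQ with hπ
  set D : Finset V := S.filter (fun v => v ∉ U₀) with hD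
  set T : Finset (V ⧸ U₀) := D.image π with hT
  have hπ0 : ∀ v : V, π v = 0 ↔ v ∈ U₀ := by
    intro v; rw [hπ, Submodule.mkQ_apply, Submodule.Quotient.mk_eq_zero]
  have hDmem : ∀ v, v ∈ D ↔ v ∈ S ∧ v ∉ U₀ := by
    intro v; rw [hD, Finset.mem_filter]
  have hT0 : ∀ t ∈ T, t ≠ 0 := by
    intro t ht
    obtain ⟨v, hv, rfl⟩ := Finset.mem_image.mp ht
    exact fun h => ((hDmem v).mp hv).2 ((hπ0 v).mp h)
  obtain ⟨X, hXT, hXmf, hXcov⟩ := exists_projective_reps (F := F) T hT0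
  -- fibers
  set fib : (V ⧸ U₀) → Finset V := fun x => D.filter (fun v => ∃ c : F, c ≠ 0 ∧ π v = c • x) with hfib
  have hVU : ∀ v ∈ V₀, v ∈ U₀ := fun v hv => subset_span (Finset.mem_coe.mpr hv)
  have hfib2 : ∀ x ∈ X, 2 ≤ (fib x).card := by
    intro x hx
    obtain ⟨v₀, hv₀D, hv₀x⟩ := Finset.mem_image.mp (hXT hx)
    have hv₀S : v₀ ∈ S := ((hDmem v₀).mp hv₀D).1
    have hv₀U : v₀ ∉ U₀ := ((hDmem v₀).mp hv₀D).2
    have hv₀V₀ : v₀ ∉ V₀ := fun h => hv₀U (hVU v₀ h)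
    have hWS : insert v₀ V₀ ⊆ S := Finset.insert_subset hv₀S hV₀S
    have hWc : (insert v₀ V₀).card = k := by
      rw [Finset.card_insert_of_notMem hv₀V₀, hV₀c]; omega
    have hWind : LinearIndependent F
        (fun v : ((insert v₀ V₀ : Finset V) : Set V) => (v : V)) := by
      have h2 := LinearIndepOn.id_insert (s := (V₀ : Set V)) hV₀ind (x := v₀) (by rw [← hU₀]; exact hv₀U)
      rw [Finset.coe_insert]
      exact h2
    have hsg := hSsg (insert v₀ V₀) hWS hWc hWind
    rw [ncard_inter_span_eq_card_filter] at hsg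
    set A := S.filter (fun v => v ∈ span F ((insert v₀ V₀ : Finset V) : Set V)) with hA
    have hsplit : (A.filter (fun v => v ∈ U₀)).card
        + (A.filter (fun v => ¬ v ∈ U₀)).card = A.card :=
      Finset.card_filter_add_card_filter_not _
    have h1 : (A.filter (fun v => v ∈ U₀)).card ≤ k - 1 := by
      have hsub : A.filter (fun v => v ∈ U₀) ⊆ S.filter (fun v => v ∈ U₀) := by
        intro v hv
        rw [Finset.mem_filter] at hv ⊢
        exact ⟨(Finset.mem_filter.mp hv.1).1, hv.2⟩
      calc (A.filter (fun v => v ∈ U₀)).card ≤ (S.filter (fun v => v ∈ U₀)).card :=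
              Finset.card_le_card hsub
        _ = ((S : Set V) ∩ (U₀ : Set V)).ncard := (ncard_inter_span_eq_card_filter S U₀).symm
        _ ≤ k - 1 := hlight
    have h2 : A.filter (fun v => ¬ v ∈ U₀) ⊆ fib x := by
      intro v hv
      rw [Finset.mem_filter] at hv
      obtain ⟨hvA, hvU⟩ := hv
      rw [hA, Finset.mem_filter] at hvA
      obtain ⟨hvS, hvsp⟩ := hvA
      have hπv : π v ∈ span F {x} := by
        have h3 : π v ∈ Submodule.map π (span F ((insert v₀ V₀ : Finset V) : Set V)) :=
          Submodule.mem_map_of_mem hvsp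
        rw [← Submodule.span_image] at h3
        have hle : span F (π '' ((insert v₀ V₀ : Finset V) : Set V)) ≤ span F {x} := by
          rw [Submodule.span_le]
          intro y hy
          obtain ⟨w, hw, rfl⟩ := hy
          rw [Finset.coe_insert, Set.mem_insert_iff] at hw
          rcases hw with rfl | hw
          · rw [hv₀x]; exact subset_span rfl
          · have : π w = 0 := (hπ0 w).mpr (hVU w hw)
            rw [SetLike.mem_coe, this]; exact Submodule.zero_mem _
        exact hle h3
      rw [Submodule.mem_span_singleton] at hπv
      obtain ⟨a, ha⟩ := hπv
      have ha0 : a ≠ 0 := by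
        rintro rfl
        rw [zero_smul] at ha
        exact hvU ((hπ0 v).mp ha.symm)
      rw [hfib, Finset.mem_filter]
      exact ⟨(hDmem v).mpr ⟨hvS, hvU⟩, a, ha0, ha.symm⟩
    have h4 : (A.filter (fun v => ¬ v ∈ U₀)).card ≤ (fib x).card := Finset.card_le_card h2
    omega
  have hcount : 2 * X.card + 1 ≤ S.card := by
    have hdisj : ∀ x ∈ X, ∀ y ∈ X, x ≠ y → Disjoint (fib x) (fib y) := by
      intro x hx y hy hxy
      rw [Finset.disjoint_left]
      intro v hvx hvy
      rw [hfib, Finset.mem_filter] at hvx hvy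
      obtain ⟨-, c, hc, hcx⟩ := hvx
      obtain ⟨-, d, hd, hdy⟩ := hvy
      have heq : y = (d⁻¹ * c) • x := by
        rw [mul_smul, ← hcx, hdy, smul_smul, inv_mul_cancel₀ hd, one_smul]
      exact hxy (hXmf x hx y hy _ heq).symm
    have hbi : (X.biUnion fib).card = ∑ x ∈ X, (fib x).card := Finset.card_biUnion hdisj
    have hsum : 2 * X.card ≤ ∑ x ∈ X, (fib x).card := by
      calc 2 * X.card = ∑ _x ∈ X, 2 := by rw [Finset.sum_const, smul_eq_mul, mul_comm]
        _ ≤ ∑ x ∈ X, (fib x).card := Finset.sum_le_sum hfib2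
    have hbiD : X.biUnion fib ⊆ D := by
      intro v hv
      obtain ⟨x, -, hvx⟩ := Finset.mem_biUnion.mp hv
      exact Finset.filter_subset _ _ hvx
    have hXD : 2 * X.card ≤ D.card := by
      calc 2 * X.card ≤ ∑ x ∈ X, (fib x).card := hsum
        _ = (X.biUnion fib).card := hbi.symm
        _ ≤ D.card := Finset.card_le_card hbiD
    have hV₀sub : V₀ ⊆ S.filter (fun v => v ∈ U₀) := by
      intro v hv
      exact Finset.mem_filter.mpr ⟨hV₀S hv, hVU v hv⟩
    have hsplitS : (S.filter (fun v => v ∈ U₀)).card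
        + (S.filter (fun v => ¬ v ∈ U₀)).card = S.card :=
      Finset.card_filter_add_card_filter_not _
    have hV₀card : k - 1 ≤ (S.filter (fun v => v ∈ U₀)).card :=
      hV₀c ▸ Finset.card_le_card hV₀sub
    have hDcard : D.card = (S.filter (fun v => ¬ v ∈ U₀)).card := by rw [hD]
    omega
  have hrank : Module.finrank F (span F (S : Set V)) ≤
      (k - 1) + Module.finrank F (span F (X : Set (V ⧸ U₀))) := by
    haveI hfdU : FiniteDimensional F U₀ := by rw [hU₀]; infer_instance
    set f : (span F (S : Set V)) →ₗ[F] (V ⧸ U₀) := π.comp (span F (S : Set V)).subtype with hf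
    have hrn := LinearMap.finrank_range_add_finrank_ker f
    have hker : Module.finrank F (LinearMap.ker f) ≤ k - 1 := by
      have hmem : ∀ x : LinearMap.ker f, ((x : span F (S : Set V)) : V) ∈ U₀ := by
        intro x
        have hx : f ↑x = 0 := LinearMap.mem_ker.mp x.2
        exact (hπ0 _).mp hx
      set g : (LinearMap.ker f) →ₗ[F] U₀ :=
        LinearMap.codRestrict U₀ (((span F (S : Set V)).subtype).comp (LinearMap.ker f).subtype) hmem with hg
      have hginj : Function.Injective g := by
        intro a b hab
        have h2 := congrArg (Subtype.val) hab
        exact Subtype.ext (Subtype.ext h2)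
      have h5 : Module.finrank F (LinearMap.ker f) ≤ Module.finrank F U₀ :=
        LinearMap.finrank_le_finrank_of_injective hginj
      have h6 : Module.finrank F U₀ ≤ k - 1 := by
        rw [hU₀, ← hV₀c]
        exact finrank_span_finset_le_card (R := F) V₀
      omega
    have hrange : Module.finrank F (LinearMap.range f)
        ≤ Module.finrank F (span F (X : Set (V ⧸ U₀))) := by
      have h7 : LinearMap.range f = Submodule.map π (span F (S : Set V)) := by
        rw [hf, LinearMap.range_comp, Submodule.range_subtype]
      have h9 : span F (S : Set V) ≤ span F (D : Set V) ⊔ U₀ := by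
        rw [Submodule.span_le]
        intro v hv
        rw [Finset.mem_coe] at hv
        by_cases hvU : v ∈ U₀
        · exact Submodule.mem_sup_right hvU
        · exact Submodule.mem_sup_left (subset_span (Finset.mem_coe.mpr ((hDmem v).mpr ⟨hv, hvU⟩)))
      have h10 : Submodule.map π U₀ = ⊥ := by
        rw [eq_bot_iff]
        rintro q hq
        obtain ⟨v, hv, rfl⟩ := Submodule.mem_map.mp hq
        rw [Submodule.mem_bot]
        exact (hπ0 v).mpr hv
      have h11 : Submodule.map π (span F (D : Set V)) ≤ span F (X : Set (V ⧸ U₀)) := by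
        rw [← Submodule.span_image, Submodule.span_le]
        intro q hq
        obtain ⟨v, hv, rfl⟩ := hq
        have hπvT : π v ∈ T := by
          rw [hT]
          exact Finset.mem_image_of_mem π (Finset.mem_coe.mp hv)
        obtain ⟨x, hxX, c, hc, hvc⟩ := hXcov _ hπvT
        rw [SetLike.mem_coe, hvc]
        exact Submodule.smul_mem _ _ (subset_span (Finset.mem_coe.mpr hxX))
      have h8 : Submodule.map π (span F (S : Set V)) ≤ span F (X : Set (V ⧸ U₀)) := by
        calc Submodule.map π (span F (S : Set V))
            ≤ Submodule.map π (span F (D : Set V) ⊔ U₀) := Submodule.map_mono h9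
          _ = Submodule.map π (span F (D : Set V)) ⊔ Submodule.map π U₀ :=
              Submodule.map_sup _ _ _
          _ = Submodule.map π (span F (D : Set V)) := by rw [h10, sup_bot_eq]
          _ ≤ span F (X : Set (V ⧸ U₀)) := h11
      rw [h7]
      exact finrank_mono h8
    omega
  have hgood : GoodSet F k X := by
    refine ⟨fun x hx => hT0 x (hXT hx), hXmf, ?_⟩
    intro Tb hTbX hTbc hTbind
    have hTbT : ∀ x ∈ Tb, x ∈ T := fun x hx => hXT (hTbX hx)
    have hwex : ∀ q ∈ T, ∃ v, v ∈ D ∧ π v = q := by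
      intro q hq
      obtain ⟨v, hv, hq'⟩ := Finset.mem_image.mp hq
      exact ⟨v, hv, hq'⟩
    set wfn : (V ⧸ U₀) → V := fun q => if h : q ∈ T then (hwex q h).choose else 0 with hwfn
    have hw : ∀ q ∈ T, wfn q ∈ D ∧ π (wfn q) = q := by
      intro q hq
      rw [hwfn]
      simp only [dif_pos hq]
      exact (hwex q hq).choose_spec
    have hwinj : ∀ a ∈ Tb, ∀ b ∈ Tb, wfn a = wfn b → a = b := by
      intro a ha b hb hab
      have h1 := (hw a (hTbT a ha)).2
      have h2 := (hw b (hTbT b hb)).2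
      rw [← h1, ← h2, hab]
    set W' : Finset V := Tb.image wfn with hW'
    have hW'c : W'.card = k := by
      rw [hW', Finset.card_image_of_injOn (fun a ha b hb h => hwinj a ha b hb h), hTbc]
    have hW'S : W' ⊆ S := by
      intro v hv
      obtain ⟨q, hq, rfl⟩ := Finset.mem_image.mp (by rwa [hW'] at hv)
      exact ((hDmem _).mp (hw q (hTbT q hq)).1).1
    have hW'img : W'.image π = Tb := by
      rw [hW', Finset.image_image]
      have hcongr : Finset.image (⇑π ∘ wfn) Tb = Finset.image id Tb := by
        apply Finset.image_congr
        intro q hq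
        exact (hw q (hTbT q hq)).2
      rw [hcongr, Finset.image_id]
    have hdisjspan : ∀ v ∈ span F (W' : Set V), π v = 0 → v = 0 := by
      intro v hv hv0
      rw [mem_span_finset] at hv
      obtain ⟨g, -, hg⟩ := hv
      have hπsum : ∑ u ∈ W', g u • π u = 0 := by
        have h := congrArg π hg
        rw [map_sum] at h
        simp only [map_smul] at h
        rw [hv0] at h
        exact h
      have hsum2 : ∑ q ∈ Tb, g (wfn q) • q = 0 := by
        rw [hW', Finset.sum_image hwinj] at hπsum
        calc ∑ q ∈ Tb, g (wfn q) • q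
            = ∑ q ∈ Tb, g (wfn q) • π (wfn q) :=
              Finset.sum_congr rfl (fun q hq => by rw [(hw q (hTbT q hq)).2])
          _ = 0 := hπsum
      have hcoe : ∑ i : (Tb : Set (V ⧸ U₀)), g (wfn i.1) • (i.1 : V ⧸ U₀)
          = ∑ q ∈ Tb, g (wfn q) • q := Finset.sum_coe_sort Tb (fun q => g (wfn q) • q)
      have hco := Fintype.linearIndependent_iff.mp hTbind (fun i => g (wfn i.1))
        (by rw [hcoe]; exact hsum2)
      have hgz : ∀ q ∈ Tb, g (wfn q) = 0 := fun q hq => hco ⟨q, hq⟩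
      have hv2 : v = ∑ q ∈ Tb, g (wfn q) • wfn q := by
        rw [← hg, hW', Finset.sum_image hwinj]
      rw [hv2]
      exact Finset.sum_eq_zero (fun q hq => by rw [hgz q hq, zero_smul])
    have hmapmem : ∀ v : ↥(W' : Set V), π v.1 ∈ (Tb : Set (V ⧸ U₀)) := by
      intro v
      have hv : (v : V) ∈ W' := v.2
      have h1 : π v.1 ∈ W'.image π := Finset.mem_image_of_mem _ hv
      rw [hW'img] at h1
      exact h1
    have hW'ind : LinearIndependent F (fun v : (W' : Set V) => (v : V)) := by
      apply LinearIndependent.of_comp π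
      set e : ↥(W' : Set V) → ↥(Tb : Set (V ⧸ U₀)) := fun v => ⟨π v.1, hmapmem v⟩ with he
      have heinj : Function.Injective e := by
        intro a b hab
        have h1 : π a.1 = π b.1 := congrArg Subtype.val hab
        obtain ⟨qa, hqa, ha'⟩ := Finset.mem_image.mp (by rw [← hW']; exact a.2)
        obtain ⟨qb, hqb, hb'⟩ := Finset.mem_image.mp (by rw [← hW']; exact b.2)
        apply Subtype.ext
        rw [← ha', ← hb']
        have h2 : qa = qb := by
          rw [← (hw qa (hTbT qa hqa)).2, ← (hw qb (hTbT qb hqb)).2, ha', hb', h1]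
        rw [h2]
      have hcomp : (fun v : ↥(Tb : Set (V ⧸ U₀)) => (v.1 : V ⧸ U₀)) ∘ e
          = ⇑π ∘ (fun v : ↥(W' : Set V) => (v.1 : V)) := rfl
      rw [← hcomp]
      exact hTbind.comp e heinj
    have hsg := hSsg W' hW'S hW'c hW'ind
    rw [ncard_inter_span_eq_card_filter] at hsg
    have hzex : ∃ z, z ∈ S ∧ z ∈ span F (W' : Set V) ∧ z ∉ W' := by
      by_contra hcon
      push_neg at hcon
      have hsub : S.filter (fun v => v ∈ span F (W' : Set V)) ⊆ W' := by
        intro z hz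
        rw [Finset.mem_filter] at hz
        exact hcon z hz.1 hz.2
      have h6 := Finset.card_le_card hsub
      omega
    obtain ⟨z, hzS, hzsp, hzW'⟩ := hzex
    have hz0 : z ≠ 0 := hS0 z hzS
    have hπz : π z ≠ 0 := fun h => hz0 (hdisjspan z hzsp h)
    have hzU : z ∉ U₀ := fun h => hπz ((hπ0 z).mpr h)
    have hπzT : π z ∈ T := by
      rw [hT]
      exact Finset.mem_image_of_mem _ ((hDmem z).mpr ⟨hzS, hzU⟩)
    obtain ⟨xz, hxzX, c, hc, hzc⟩ := hXcov _ hπzT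
    have hπz_sp : π z ∈ span F (Tb : Set (V ⧸ U₀)) := by
      have h1 : π z ∈ Submodule.map π (span F (W' : Set V)) := Submodule.mem_map_of_mem hzsp
      rw [← Submodule.span_image] at h1
      have h2 : π '' (W' : Set V) = (Tb : Set (V ⧸ U₀)) := by
        rw [← Finset.coe_image, hW'img]
      rwa [h2] at h1
    have hxz_sp : xz ∈ span F (Tb : Set (V ⧸ U₀)) := by
      have h3 : xz = c⁻¹ • π z := by rw [hzc, smul_smul, inv_mul_cancel₀ hc, one_smul]
      rw [h3]
      exact Submodule.smul_mem _ _ hπz_sp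
    have hxz_not : xz ∉ Tb := by
      intro hmem
      have hwz := hw xz (hTbT xz hmem)
      have hwW' : wfn xz ∈ W' := by rw [hW']; exact Finset.mem_image_of_mem _ hmem
      have h1 : π (z - c • wfn xz) = 0 := by
        rw [map_sub, map_smul, hwz.2, ← hzc, sub_self]
      have h2 : z - c • wfn xz ∈ span F (W' : Set V) :=
        sub_mem hzsp (Submodule.smul_mem _ _ (subset_span (Finset.mem_coe.mpr hwW')))
      have h3 : z = c • wfn xz := by
        have h4 := hdisjspan _ h2 h1
        rwa [sub_eq_zero] at h4
      have h5 : z = wfn xz := hSmf (wfn xz) (hW'S hwW') z hzS c h3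
      exact hzW' (h5 ▸ hwW')
    have hfin : ((X : Set (V ⧸ U₀)) ∩ (span F (Tb : Set (V ⧸ U₀)) : Set (V ⧸ U₀))).Finite :=
      Set.Finite.inter_of_left (X.finite_toSet) _
    have hsub2 : ((insert xz Tb : Finset (V ⧸ U₀)) : Set (V ⧸ U₀)) ⊆
        (X : Set (V ⧸ U₀)) ∩ (span F (Tb : Set (V ⧸ U₀)) : Set (V ⧸ U₀)) := by
      intro q hq
      rw [Finset.coe_insert, Set.mem_insert_iff] at hq
      rcases hq with rfl | hq
      · exact ⟨hxzX, hxz_sp⟩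
      · exact ⟨hTbX (Finset.mem_coe.mp hq), subset_span hq⟩
    calc k + 1 = (insert xz Tb).card := by
          rw [Finset.card_insert_of_notMem hxz_not, hTbc]
      _ = ((insert xz Tb : Finset (V ⧸ U₀)) : Set (V ⧸ U₀)).ncard :=
          (Set.ncard_coe_finset _).symm
      _ ≤ _ := Set.ncard_le_ncard hsub2 hfin
  exact ⟨V ⧸ U₀, inferInstance, inferInstance, X, hgood, hcount, hrank⟩

theorem goodset_bound_aux (M : ℕ) : ∀ (k : ℕ), 2 ≤ k →
    ∀ (W : Type v) (_ : AddCommGroup W) (_ : Module F W) (S : Finset W),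
      2 * S.card + k ≤ M → GoodSet F k S →
      2 ^ (Module.finrank F (span F (S : Set W))) ≤ (S.card + 1) ^ (k - 1) := by
  induction M using Nat.strong_induction_on with
  | _ M ih =>
    intro k hk W iW1 iW2 S hM hS
    classical
    obtain ⟨hS0, hSmf, hSsg⟩ := hS
    by_cases hrk : Module.finrank F (span F (S : Set W)) ≤ k - 1
    · rcases S.eq_empty_or_nonempty with rfl | hne
      · have h0 : Module.finrank F (span F ((∅ : Finset W) : Set W)) = 0 := by
          simp [Finset.coe_empty, Submodule.span_empty]
        rw [h0]
        simpa using Nat.one_le_pow (k-1) 1 (by omega)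
      · have hc1 : 1 ≤ S.card := Finset.card_pos.mpr hne
        calc 2 ^ (Module.finrank F (span F (S : Set W)))
            ≤ 2 ^ (k-1) := Nat.pow_le_pow_right (by omega) hrk
          _ ≤ (S.card + 1) ^ (k-1) := Nat.pow_le_pow_left (by omega) _
    · push_neg at hrk
      have hSne : S.Nonempty := by
        by_contra h
        rw [Finset.not_nonempty_iff_eq_empty] at h
        subst h
        have h0 : Module.finrank F (span F ((∅ : Finset W) : Set W)) = 0 := by
          simp [Finset.coe_empty, Submodule.span_empty]
        omega
      by_cases H : ∃ V₀ : Finset W, V₀ ⊆ S ∧ V₀.card = k - 1 ∧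
          LinearIndependent F (fun v : ↥(V₀ : Set W) => (v : W)) ∧
          ((S : Set W) ∩ (span F (V₀ : Set W) : Set W)).ncard ≤ k - 1
      · obtain ⟨V₀, h1, h2, h3, h4⟩ := H
        obtain ⟨Q, iQ1, iQ2, X, hgood, hcount, hrank⟩ :=
          halving_step k hk S ⟨hS0, hSmf, hSsg⟩ V₀ h1 h2 h3 h4
        have hrec := ih (2 * X.card + k) (by omega) k hk Q iQ1 iQ2 X (le_refl _) hgood
        calc 2 ^ (Module.finrank F (span F (S : Set W)))
            ≤ 2 ^ ((k-1) + Module.finrank F (span F (X : Set Q))) :=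
              Nat.pow_le_pow_right (by omega) hrank
          _ = 2 ^ (k-1) * 2 ^ (Module.finrank F (span F (X : Set Q))) := pow_add 2 _ _
          _ ≤ 2 ^ (k-1) * (X.card + 1) ^ (k-1) := Nat.mul_le_mul_left _ hrec
          _ = (2 * (X.card + 1)) ^ (k-1) := (mul_pow 2 _ _).symm
          _ ≤ (S.card + 1) ^ (k-1) := Nat.pow_le_pow_left (by omega) _
      · push_neg at H
        rcases Nat.lt_or_ge k 3 with hk2 | hk3
        · exfalso
          have hk2' : k = 2 := by omega
          obtain ⟨v, hv⟩ := hSne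
          have hv0 : v ≠ 0 := hS0 v hv
          have hind : LinearIndependent F (fun x : ↥(({v} : Finset W) : Set W) => (x : W)) := by
            rw [Finset.coe_singleton]
            exact LinearIndepOn.singleton (R := F) (v := id) hv0
          have h5 := H {v} (by simpa using hv) (by rw [Finset.card_singleton, hk2']) hind
          have hsub : (S : Set W) ∩ (span F (({v} : Finset W) : Set W) : Set W) ⊆ {v} := by
            rintro w ⟨hwS, hwsp⟩
            rw [Finset.coe_singleton, SetLike.mem_coe, mem_span_singleton] at hwsp
            obtain ⟨a, ha⟩ := hwsp
            exact Set.mem_singleton_iff.mpr (hSmf v hv w hwS a ha.symm)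
          have hle := Set.ncard_le_ncard hsub (Set.finite_singleton v)
          rw [Set.ncard_singleton] at hle
          omega
        · have hgood' : GoodSet F (k-1) S := by
            refine ⟨hS0, hSmf, ?_⟩
            intro T hT hTc hTind
            have h6 := H T hT hTc hTind
            omega
          have hrec := ih (2 * S.card + (k-1)) (by omega) (k-1) (by omega) W iW1 iW2 S
            (le_refl _) hgood'
          calc 2 ^ (Module.finrank F (span F (S : Set W)))
              ≤ (S.card + 1) ^ (k - 1 - 1) := hrec
            _ ≤ (S.card + 1) ^ (k - 1) := Nat.pow_le_pow_right (by omega) (by omega)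

theorem goodset_bound {W : Type v} [iW1 : AddCommGroup W] [iW2 : Module F W] (k : ℕ) (hk : 2 ≤ k)
    (S : Finset W) (hS : GoodSet F k S) :
    2 ^ (Module.finrank F (span F (S : Set W))) ≤ (S.card + 1) ^ (k - 1) :=
  goodset_bound_aux (2 * S.card + k) k hk W iW1 iW2 S (le_refl _) hS

lemma final_numeric (k r m : ℕ) (hk : 2 ≤ k) (hr : 9 * k ≤ r)
    (hb : 2 ^ r ≤ (m + 1) ^ (k - 1)) :
    (2 : ℝ) ^ ((r : ℝ) / ((9 : ℝ) * (k : ℝ))) ≤ (m : ℝ) := by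
  have hr1 : 1 ≤ r := by omega
  have hm : 1 ≤ m := by
    by_contra h
    push_neg at h
    have hm0 : m = 0 := by omega
    subst hm0
    simp only [zero_add, one_pow] at hb
    have h2 : 2 ^ 1 ≤ 2 ^ r := Nat.pow_le_pow_right (by omega) hr1
    omega
  set K : ℝ := (k : ℝ) with hK
  set R : ℝ := (r : ℝ) with hR
  have hK2 : (2 : ℝ) ≤ K := by rw [hK]; exact_mod_cast hk
  have hR9 : 9 * K ≤ R := by
    rw [hK, hR]
    exact_mod_cast hr
  have hβpos : (0:ℝ) < K - 1 := by linarith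
  have hbR : (2 : ℝ) ^ R ≤ ((m : ℝ) + 1) ^ (K - 1) := by
    have h1 : ((2 ^ r : ℕ) : ℝ) ≤ (((m+1) ^ (k-1) : ℕ) : ℝ) := by exact_mod_cast hb
    push_cast at h1
    calc (2:ℝ) ^ R = (2:ℝ) ^ (r : ℕ) := by rw [hR, Real.rpow_natCast]
      _ ≤ ((m:ℝ)+1) ^ ((k-1 : ℕ)) := h1
      _ = ((m:ℝ)+1) ^ (((k-1:ℕ)) : ℝ) := (Real.rpow_natCast _ _).symm
      _ = ((m:ℝ)+1) ^ (K - 1) := by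
          congr 1
          rw [hK]
          push_cast [Nat.cast_sub (by omega : 1 ≤ k)]
          ring
  have h2 : (2:ℝ) ^ (R / (K - 1)) ≤ (m:ℝ) + 1 := by
    have h3 := Real.rpow_le_rpow (by positivity) hbR (by positivity : (0:ℝ) ≤ 1/(K-1))
    rw [← Real.rpow_mul (by norm_num : (0:ℝ) ≤ 2)] at h3
    rw [← Real.rpow_mul (by positivity : (0:ℝ) ≤ (m:ℝ)+1)] at h3
    rw [mul_one_div] at h3
    rw [mul_one_div, div_self (ne_of_gt hβpos), Real.rpow_one] at h3
    exact h3
  have hexp : R / (9 * K) + 1 ≤ R / (K - 1) := by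
    rw [div_add' _ _ _ (by positivity : (9:ℝ)*K ≠ 0)]
    rw [div_le_div_iff₀ (by positivity) hβpos]
    nlinarith [mul_le_mul_of_nonneg_right hR9 (by linarith : (0:ℝ) ≤ K - 1),
      mul_nonneg (by positivity : (0:ℝ) ≤ R) (by linarith : (0:ℝ) ≤ K)]
  have h4 : (2:ℝ) ^ (R / (9*K)) ≤ (2:ℝ) ^ (R/(K-1) - 1) :=
    Real.rpow_le_rpow_of_exponent_le (by norm_num) (by linarith)
  have h5 : (2:ℝ) ^ (R/(K-1) - 1) = (2:ℝ) ^ (R/(K-1)) / 2 := by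
    rw [Real.rpow_sub (by norm_num), Real.rpow_one]
  have hm1 : (1:ℝ) ≤ (m:ℝ) := by exact_mod_cast hm
  calc (2:ℝ) ^ (R/(9*K)) ≤ (2:ℝ)^(R/(K-1)) / 2 := by rw [← h5]; exact h4
    _ ≤ ((m:ℝ)+1)/2 := by linarith
    _ ≤ (m:ℝ) := by linarith

end Aux
end SGAux

namespace SGPaper

variable {F : Type*}

/-- The linear form with coefficient vector `v`. -/
def toForm [Field F] {n : ℕ} (v : Fin n → F) : MvPolynomial (Fin n) F :=
  ∑ i, MvPolynomial.C (v i) * MvPolynomial.X i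

/-- A multiplication term `c · ∏_{ℓ ∈ S} ℓ`. -/
def mTerm [Field F] {n : ℕ} (c : F) (S : Multiset (Fin n → F)) : MvPolynomial (Fin n) F :=
  MvPolynomial.C c * (S.map toForm).prod

/-- The `F`-linear span of the forms in the multiset `S` (radical span). -/
def radsp (F : Type*) [Field F] {n : ℕ} (S : Multiset (Fin n → F)) :
    Submodule F (Fin n → F) :=
  Submodule.span F {v | v ∈ S}

/-- `b ∈ F^* · a + K`, i.e. `b` is similar to `a` modulo the subspace `K`. -/
def simRel [Field F] {n : ℕ} (K : Submodule F (Fin n → F)) (a b : Fin n → F) : Prop :=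
  ∃ c : F, c ≠ 0 ∧ b - c • a ∈ K

/-- A `K`-matching between two multisets of linear forms: a bijection `π` with
`π(ℓ) ∈ F^*·ℓ + K` for all `ℓ`. -/
def KMatching [Field F] {n : ℕ} (K : Submodule F (Fin n → F))
    (A B : Multiset (Fin n → F)) : Prop :=
  Multiset.Rel (simRel K) A B

/-- No element of `S` is a scalar multiple of another element of `S`. -/
def MultipleFree [Field F] {n : ℕ} (S : Finset (Fin n → F)) : Prop :=
  ∀ v ∈ S, ∀ w ∈ S, ∀ c : F, w = c • v → w = v

/-- `S` is `SG_k`-closed: it consists of nonzero vectors, is multiple-free, and the span of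
any `k` linearly independent vectors of `S` contains at least `k+1` vectors of `S`. -/
def SGClosed (F : Type*) [Field F] (k : ℕ) {n : ℕ} (S : Finset (Fin n → F)) : Prop :=
  (∀ v ∈ S, v ≠ 0) ∧ MultipleFree S ∧
    ∀ V : Finset (Fin n → F), V ⊆ S → V.card = k →
      LinearIndependent F (fun v : (V : Set (Fin n → F)) => (v : Fin n → F)) →
      k + 1 ≤ ((S : Set (Fin n → F)) ∩
        (Submodule.span F (V : Set (Fin n → F)) : Set (Fin n → F))).ncard

/-- The rank of a finite set of vectors. -/
def sgRank (F : Type*) [Field F] {n : ℕ} (S : Finset (Fin n → F)) : ℕ :=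
  Module.finrank F (Submodule.span F (S : Set (Fin n → F)))

/-- `SG_k(F, m)`: the largest possible rank of an `SG_k`-closed set of at most `m`
vectors in `F^n`, over all `n`. -/
def SGBound (F : Type*) [Field F] (k m : ℕ) : ℕ :=
  sSup {r | ∃ n : ℕ, ∃ S : Finset (Fin n → F), SGClosed F k S ∧ S.card ≤ m ∧ r = sgRank F S}

/-- The polynomial computed by a multiplication gate of a depth-3 circuit. -/
def circTerm [Field F] {n d : ℕ} (c : F) (v : Fin d → Fin n → F) : MvPolynomial (Fin n) F :=
  MvPolynomial.C c * ∏ j, toForm (v j)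

/-- The multiset `L(T_i)` of linear forms of the `i`-th gate. -/
def Lmul {F : Type*} {n k d : ℕ} (ℓ : Fin k → Fin d → Fin n → F) (i : Fin k) :
    Multiset (Fin n → F) :=
  Multiset.map (ℓ i) Finset.univ.val

/-- The circuit is simple: no nonzero linear form divides all the gates. -/
def IsSimple [Field F] {n k d : ℕ} (c : Fin k → F) (ℓ : Fin k → Fin d → Fin n → F) : Prop :=
  ¬ ∃ v : Fin n → F, v ≠ 0 ∧ ∀ i, toForm v ∣ circTerm (c i) (ℓ i)

/-- The circuit is minimal: no nonempty proper subset of the gates sums to zero. -/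
def IsMinimal [Field F] {n k d : ℕ} (c : Fin k → F) (ℓ : Fin k → Fin d → Fin n → F) : Prop :=
  ∀ S : Finset (Fin k), S.Nonempty → S ≠ Finset.univ →
    ∑ i ∈ S, circTerm (c i) (ℓ i) ≠ 0

/-- The rank of a depth-3 circuit: the rank of all the linear forms occurring in it. -/
def circRank (F : Type*) [Field F] {n k d : ℕ} (ℓ : Fin k → Fin d → Fin n → F) : ℕ :=
  Module.finrank F (Submodule.span F (Set.range fun p : Fin k × Fin d => ℓ p.1 p.2))

open Classical in
/-- `M(L_K(T_i))`: the product of the forms of the gate lying in the subspace `K`. -/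
def nucTerm [Field F] {n d : ℕ} (K : Submodule F (Fin n → F)) (v : Fin d → Fin n → F) :
    MvPolynomial (Fin n) F :=
  ∏ j ∈ Finset.univ.filter (fun j => v j ∈ K), toForm (v j)

/-- A partition `P` splits `S` if some class meets `S` but does not contain it. -/
def Splits {U : Type*} [DecidableEq U] {s : Finset U} (P : Finpartition s)
    (S : Finset U) : Prop :=
  ∃ X ∈ P.parts, (X ∩ S).Nonempty ∧ ¬ S ⊆ X


/-- If `S` is an `SG_k`-closed set of vectors in `F^n` (`k ≥ 2`) whose rank
`r` satisfies `r ≥ 9k`, then `|S| ≥ 2^(r/(9k))`. -/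
theorem sg_closed_card_lower_bound {F : Type*} [Field F] {n : ℕ} (k : ℕ) (hk : 2 ≤ k)
    (S : Finset (Fin n → F)) (hS : SGClosed F k S)
    (hr : 9 * k ≤ sgRank F S) :
    (2 : ℝ) ^ ((sgRank F S : ℝ) / ((9 : ℝ) * k)) ≤ (S.card : ℝ) := by
  obtain ⟨h0, hmf, hcl⟩ := hS
  have hb : 2 ^ (sgRank F S) ≤ (S.card + 1) ^ (k - 1) :=
    SGAux.goodset_bound k hk S ⟨h0, hmf, hcl⟩
  exact SGAux.final_numeric k (sgRank F S) S.card hk hr hb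

end SGPaper
end
end

section
/- For any field F and integers k, m ≥ 2, SG_k(F,m) ≤ 9·k·log₂ m, i.e., every SG_k-closed set of at most m vectors in F^n (for any n) has rank at most 9·k·log₂ m. -/
open MvPolynomial

noncomputable section

namespace SGPaper

variable {F : Type*}

private lemma exists_extra_mem {α : Type*} {A : Set α} {V : Finset α} (hfin : A.Finite)
    (hsub : ↑V ⊆ A) (hcard : V.card + 1 ≤ A.ncard) : ∃ y ∈ A, y ∉ V := by
  by_contra h
  push_neg at h
  have hsub2 : A ⊆ (V : Set α) := fun y hy => h y hy
  have hle := Set.ncard_le_ncard hsub2 V.finite_toSet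
  rw [Set.ncard_coe_finset] at hle
  omega

private lemma sg_nonempty {n : ℕ} [Field F] {S : Finset (Fin n → F)} (h : 1 ≤ sgRank F S) :
    S.Nonempty := by
  rcases S.eq_empty_or_nonempty with h0 | h0
  · subst h0
    simp [sgRank] at h
  · exact h0

set_option maxHeartbeats 1000000 in
private lemma step {n : ℕ} [Field F] (k : ℕ) (hk : 2 ≤ k) (S : Finset (Fin n → F))
    (hS : SGClosed F k S) (hr : k ≤ sgRank F S) :
    ∃ B : Finset (Fin n → F), SGClosed F k B ∧ 2 * B.card + 1 ≤ S.card ∧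
      sgRank F S ≤ (k - 1) + sgRank F B ∧ sgRank F B + 1 ≤ sgRank F S := by
  classical
  obtain ⟨hne, hmf, hsg⟩ := hS
  -- maximal "closed independent" subset T
  set P : Finset (Finset (Fin n → F)) := S.powerset.filter
    (fun T => T.card ≤ k ∧
      (LinearIndependent F fun v : (T : Set (Fin n → F)) => (v : Fin n → F)) ∧
      ∀ x ∈ S, x ∈ Submodule.span F (T : Set (Fin n → F)) → x ∈ T) with hPdef
  have hPempty : (∅ : Finset (Fin n → F)) ∈ P := by
    rw [hPdef, Finset.mem_filter, Finset.mem_powerset]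
    refine ⟨Finset.empty_subset _, by simp, ?_, ?_⟩
    · have : ((∅ : Finset (Fin n → F)) : Set (Fin n → F)) = (∅ : Set (Fin n → F)) := Finset.coe_empty
      rw [this]
      exact linearIndependent_empty F (Fin n → F)
    · intro x hx hxs
      simp only [Finset.coe_empty, Submodule.span_empty, Submodule.mem_bot] at hxs
      exact absurd hxs (hne x hx)
  obtain ⟨T, hTP, hTmax⟩ := P.exists_max_image Finset.card ⟨∅, hPempty⟩
  rw [hPdef, Finset.mem_filter, Finset.mem_powerset] at hTP
  obtain ⟨hTS, hTk, hTind, hTprop⟩ := hTP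
  set K := Submodule.span F (T : Set (Fin n → F)) with hKdef
  -- T has fewer than k elements
  have hTlt : T.card < k := by
    rcases lt_or_eq_of_le hTk with h | h
    · exact h
    · exfalso
      have hseteq : (S : Set (Fin n → F)) ∩ (K : Set (Fin n → F)) = (T : Set (Fin n → F)) := by
        apply Set.Subset.antisymm
        · rintro x ⟨hx1, hx2⟩
          exact hTprop x hx1 hx2
        · intro x hx
          exact ⟨hTS hx, Submodule.subset_span hx⟩
      have h2 := hsg T hTS h hTind
      rw [← hKdef, hseteq, Set.ncard_coe_finset, h] at h2
      omega
  have hKfr : Module.finrank F K ≤ T.card := finrank_span_finset_le_card T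
  have hrS : sgRank F S = Module.finrank F (Submodule.span F (S : Set (Fin n → F))) := rfl
  have hSnotK : ∃ v ∈ S, v ∉ K := by
    by_contra h
    push_neg at h
    have hle : Submodule.span F (S : Set (Fin n → F)) ≤ K :=
      Submodule.span_le.mpr (fun x hx => h x hx)
    have h1 := Submodule.finrank_mono (M := Fin n → F) hle
    omega
  have hSne : S.Nonempty := sg_nonempty (le_trans (by omega) hr)
  have hTpos : 1 ≤ T.card := by
    obtain ⟨v0, hv0⟩ := hSne
    have hsingle : {v0} ∈ P := by
      rw [hPdef, Finset.mem_filter, Finset.mem_powerset]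
      refine ⟨by simpa using hv0, by simp only [Finset.card_singleton]; omega, ?_, ?_⟩
      · rw [Finset.coe_singleton]
        exact LinearIndepOn.singleton (v := id) (hne v0 hv0)
      · intro x hx hxs
        rw [Finset.coe_singleton, Submodule.mem_span_singleton] at hxs
        obtain ⟨c, hc⟩ := hxs
        have hxv : x = v0 := hmf v0 hv0 x hx c hc.symm
        simp [hxv]
    have := hTmax _ hsingle
    simpa using this
  -- stuck property
  have hstuck : ∀ v ∈ S, v ∉ K → ∃ x ∈ S,
      x ∈ Submodule.span F (insert v (T : Set (Fin n → F))) ∧ x ∉ T ∧ x ≠ v := by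
    intro v hvS hvK
    by_contra hcon
    push_neg at hcon
    have hvT : v ∉ T := fun h => hvK (Submodule.subset_span h)
    have hmem : insert v T ∈ P := by
      rw [hPdef, Finset.mem_filter, Finset.mem_powerset]
      refine ⟨Finset.insert_subset hvS hTS, ?_, ?_, ?_⟩
      · rw [Finset.card_insert_of_notMem hvT]; omega
      · rw [Finset.coe_insert]
        exact LinearIndepOn.id_insert hTind hvK
      · intro x hxS hxs
        rw [Finset.coe_insert] at hxs
        by_cases hxT : x ∈ T
        · exact Finset.mem_insert_of_mem hxT
        · have hxv := hcon x hxS hxs hxT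
          rw [hxv]
          exact Finset.mem_insert_self v T
    have := hTmax _ hmem
    rw [Finset.card_insert_of_notMem hvT] at this
    omega
  -- projection along K
  obtain ⟨K', hKc⟩ := Submodule.exists_isCompl K
  set π : (Fin n → F) →ₗ[F] (Fin n → F) :=
    K'.subtype.comp (K'.linearProjOfIsCompl K hKc.symm) with hπdef
  have hπmem : ∀ x, π x ∈ K' := fun x => ((K'.linearProjOfIsCompl K hKc.symm) x).2
  have hπsub : ∀ x, x - π x ∈ K := by
    intro x
    have h := Submodule.projection_add_projection_eq_self hKc x
    have hx := eq_sub_of_add_eq h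
    have h2 : x - π x = ↑((K.linearProjOfIsCompl K' hKc) x) := by
      exact hx.symm
    rw [h2]; exact Submodule.coe_mem _
  have hπK : ∀ x ∈ K, π x = 0 := by
    intro x hx
    have h0 : K'.linearProjOfIsCompl K hKc.symm x = 0 :=
      Submodule.linearProjOfIsCompl_apply_right hKc.symm ⟨x, hx⟩
    rw [hπdef]
    simp [LinearMap.comp_apply, h0]
  have hker : ∀ x, π x = 0 → x ∈ K := by
    intro x h
    have := hπsub x
    rwa [h, sub_zero] at this
  -- the points outside K and their projective classes
  set S' : Finset (Fin n → F) := S.filter (fun x => x ∉ K) with hS'def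
  have hS'sub : S' ⊆ S := Finset.filter_subset _ _
  have hS'mem : ∀ x, x ∈ S' ↔ x ∈ S ∧ x ∉ K := by
    intro x; rw [hS'def, Finset.mem_filter]
  have hScard : S.card = T.card + S'.card := by
    have h1 : S.filter (fun x => x ∈ K) = T := by
      ext x
      simp only [Finset.mem_filter]
      constructor
      · rintro ⟨hx1, hx2⟩; exact hTprop x hx1 hx2
      · intro hx; exact ⟨hTS hx, Submodule.subset_span hx⟩
    have h2 := Finset.card_filter_add_card_filter_not (s := S) (p := fun x => x ∈ K)
    rw [h1] at h2
    rw [hS'def]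
    omega
  set cls : (Fin n → F) → Submodule F (Fin n → F) := fun x => Submodule.span F {π x}
    with hclsdef
  set Q : Finset (Submodule F (Fin n → F)) := S'.image cls with hQdef
  set rep : Submodule F (Fin n → F) → (Fin n → F) := fun q =>
    if h : ∃ x ∈ S', cls x = q then π h.choose else 0 with hrepdef
  have hrep : ∀ q ∈ Q, ∃ x ∈ S', cls x = q ∧ rep q = π x := by
    intro q hq
    rw [hQdef, Finset.mem_image] at hq
    obtain ⟨x, hx, hxq⟩ := hq
    have hex : ∃ x ∈ S', cls x = q := ⟨x, hx, hxq⟩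
    exact ⟨hex.choose, hex.choose_spec.1, hex.choose_spec.2,
      by rw [hrepdef]; exact dif_pos hex⟩
  have hrepspan : ∀ q ∈ Q, Submodule.span F {rep q} = q := by
    intro q hq
    obtain ⟨x, hx, hxq, hrq⟩ := hrep q hq
    rw [hrq, ← hxq]
  have hclsmem : ∀ x ∈ S', cls x ∈ Q := by
    intro x hx
    rw [hQdef]
    exact Finset.mem_image_of_mem _ hx
  have hπne' : ∀ x ∈ S', π x ≠ 0 := by
    intro x hx h
    exact ((hS'mem x).mp hx).2 (hker x h)
  have hrepne : ∀ q ∈ Q, rep q ≠ 0 := by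
    intro q hq
    obtain ⟨x, hx, _, hrq⟩ := hrep q hq
    rw [hrq]
    exact hπne' x hx
  set B : Finset (Fin n → F) := Q.image rep with hBdef
  have hBcard : B.card = Q.card := Finset.card_image_of_injOn (by
    intro q hq q' hq' h
    rw [← hrepspan q hq, ← hrepspan q' hq', h])
  have hBmem : ∀ w ∈ B, ∃ x ∈ S', π x = w ∧ cls x = Submodule.span F {w} ∧ rep (cls x) = w := by
    intro w hw
    rw [hBdef, Finset.mem_image] at hw
    obtain ⟨q, hq, hqw⟩ := hw
    obtain ⟨x, hx, hxq, hrq⟩ := hrep q hq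
    refine ⟨x, hx, by rw [← hqw, hrq], ?_, ?_⟩
    · rw [hxq, ← hqw, hrepspan q hq]
    · rw [hxq, hqw]
  have hBne : ∀ w ∈ B, w ≠ 0 := by
    intro w hw
    rw [hBdef, Finset.mem_image] at hw
    obtain ⟨q, hq, hqw⟩ := hw
    rw [← hqw]
    exact hrepne q hq
  have hrepcls : ∀ x ∈ S', rep (cls x) ∈ B ∧ ∃ c : F, c ≠ 0 ∧ rep (cls x) = c • π x := by
    intro x hx
    have hq := hclsmem x hx
    refine ⟨by rw [hBdef]; exact Finset.mem_image_of_mem rep hq, ?_⟩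
    have hmem : rep (cls x) ∈ Submodule.span F {π x} := by
      have h1 : rep (cls x) ∈ Submodule.span F {rep (cls x)} :=
        Submodule.mem_span_singleton_self _
      rw [hrepspan (cls x) hq] at h1
      exact h1
    obtain ⟨c, hc⟩ := Submodule.mem_span_singleton.mp hmem
    refine ⟨c, ?_, hc.symm⟩
    rintro rfl
    rw [zero_smul] at hc
    exact hrepne _ hq hc.symm
  -- B is SG_k-closed
  have hBsg : SGClosed F k B := by
    refine ⟨hBne, ?_, ?_⟩
    · -- MultipleFree
      intro a ha b hb c hbc
      by_cases hc : c = 0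
      · exact absurd (by rw [hbc, hc, zero_smul]) (hBne b hb)
      · rw [hBdef, Finset.mem_image] at ha hb
        obtain ⟨qa, hqa, hqa'⟩ := ha
        obtain ⟨qb, hqb, hqb'⟩ := hb
        have hq : qb = qa := by
          rw [← hrepspan qb hqb, ← hrepspan qa hqa, hqa', hqb', hbc]
          exact Submodule.span_singleton_smul_eq (IsUnit.mk0 c hc) a
        rw [← hqa', ← hqb', hq]
    · -- the closure property
      intro W hWB hWk hWind
      set pull : (Fin n → F) → (Fin n → F) := fun w =>
        if h : ∃ x ∈ S', π x = w ∧ rep (cls x) = w then h.choose else 0 with hpulldef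
      have hpull : ∀ w ∈ B, pull w ∈ S' ∧ π (pull w) = w ∧ rep (cls (pull w)) = w := by
        intro w hw
        obtain ⟨x, hx, h1, _h2, h3⟩ := hBmem w hw
        have hex : ∃ x ∈ S', π x = w ∧ rep (cls x) = w := ⟨x, hx, h1, h3⟩
        have hpw : pull w = hex.choose := by rw [hpulldef]; exact dif_pos hex
        rw [hpw]
        exact ⟨hex.choose_spec.1, hex.choose_spec.2.1, hex.choose_spec.2.2⟩
      set X : Finset (Fin n → F) := W.image pull with hXdef
      have hXmem : ∀ x ∈ X, x ∈ S' ∧ π x ∈ W ∧ rep (cls x) = π x := by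
        intro x hx
        rw [hXdef, Finset.mem_image] at hx
        obtain ⟨w, hw, rfl⟩ := hx
        obtain ⟨h1, h2, h3⟩ := hpull w (hWB hw)
        refine ⟨h1, by rw [h2]; exact hw, by rw [h2]; exact h3⟩
      have hXS' : X ⊆ S' := fun x hx => (hXmem x hx).1
      have hXS : X ⊆ S := fun x hx => hS'sub (hXS' hx)
      have hpullinj : Set.InjOn pull ↑W := by
        intro a ha b hb h
        have h2 := congrArg π h
        rw [(hpull a (hWB ha)).2.1, (hpull b (hWB hb)).2.1] at h2
        exact h2
      have hXcard : X.card = k := by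
        rw [hXdef, Finset.card_image_of_injOn hpullinj, hWk]
      have hπinjX : ∀ x ∈ X, ∀ x' ∈ X, π x = π x' → x = x' := by
        intro x hx x' hx' h
        rw [hXdef, Finset.mem_image] at hx hx'
        obtain ⟨w, hw, rfl⟩ := hx
        obtain ⟨w', hw', rfl⟩ := hx'
        rw [(hpull w (hWB hw)).2.1, (hpull w' (hWB hw')).2.1] at h
        rw [h]
      -- linear independence of X
      have hWindX : LinearIndependent F fun x : (X : Set (Fin n → F)) => π (x : Fin n → F) := by
        let e : ↥(X : Set (Fin n → F)) → ↥(W : Set (Fin n → F)) :=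
          fun x => ⟨π (x : Fin n → F), (hXmem x x.2).2.1⟩
        have heinj : Function.Injective e := by
          intro a b h
          have h2 : π (a : Fin n → F) = π (b : Fin n → F) :=
            congrArg (fun t : ↥(W : Set (Fin n → F)) => (t : Fin n → F)) h
          exact Subtype.ext (hπinjX _ a.2 _ b.2 h2)
        have h3 := hWind.comp e heinj
        exact h3
      have hXind : LinearIndependent F fun x : (X : Set (Fin n → F)) => (x : Fin n → F) :=
        LinearIndependent.of_comp π hWindX
      -- π is injective on the span of X
      have hzero : ∀ z ∈ Submodule.span F (X : Set (Fin n → F)), π z = 0 → z = 0 := by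
        intro z hz hπz
        rw [Submodule.mem_span_finset] at hz
        obtain ⟨f, -, hf⟩ := hz
        have hsum : ∑ x ∈ X, f x • π x = 0 := by
          rw [← hπz, ← hf, map_sum]
          simp [map_smul]
        have hall : ∀ i : (X : Set (Fin n → F)), f i = 0 := by
          apply Fintype.linearIndependent_iff.mp hWindX
          rw [Finset.univ_eq_attach, ← hsum]
          exact Finset.sum_attach X (fun x => f x • π x)
        have hz0 : ∀ x ∈ X, f x = 0 := fun x hx => hall ⟨x, hx⟩
        rw [← hf, Finset.sum_congr rfl (fun x hx => by rw [hz0 x hx, zero_smul])]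
        simp
      -- apply the SG property of S to X
      have hksg := hsg X hXS hXcard hXind
      obtain ⟨y, hy, hyX⟩ := exists_extra_mem
        ((S.finite_toSet).inter_of_left _)
        (fun x hx => ⟨hXS hx, Submodule.subset_span hx⟩)
        (by rw [hXcard]; exact hksg)
      obtain ⟨hyS, hyspan⟩ := hy
      have hyS'' : y ∈ S := hyS
      have hπy : π y ≠ 0 := fun h => hne y hyS'' (hzero y hyspan h)
      have hyS' : y ∈ S' := (hS'mem y).mpr ⟨hyS'', fun hK => hπy (hπK y hK)⟩
      have hyXf : y ∉ X := fun h => hyX h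
      -- the class of y is different from the classes of elements of X
      have hycls : ∀ x ∈ X, cls y ≠ cls x := by
        intro x hx heq
        have hxmem : π x ∈ Submodule.span F {π y} := by
          have h1 : π x ∈ Submodule.span F {π x} := Submodule.mem_span_singleton_self _
          have h2 : cls x = cls y := heq.symm
          simp only [hclsdef] at h2
          rwa [h2] at h1
        obtain ⟨c, hc⟩ := Submodule.mem_span_singleton.mp hxmem
        have hc0 : c ≠ 0 := by
          rintro rfl
          rw [zero_smul] at hc
          exact (hπne' x (hXS' hx)) hc.symm
        have hmem2 : x - c • y ∈ Submodule.span F (X : Set (Fin n → F)) :=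
          Submodule.sub_mem _ (Submodule.subset_span hx) (Submodule.smul_mem _ c hyspan)
        have hπ2 : π (x - c • y) = 0 := by
          rw [map_sub, map_smul, hc]
          abel
        have h3 : x - c • y = 0 := hzero _ hmem2 hπ2
        have h4 : x = c • y := by
          have := sub_eq_zero.mp h3
          exact this
        have h5 : x = y := hmf y hyS'' x (hXS hx) c h4
        exact hyXf (h5 ▸ hx)
      have hyQ : cls y ∈ Q := hclsmem y hyS'
      have hwyB : rep (cls y) ∈ B := by rw [hBdef]; exact Finset.mem_image_of_mem rep hyQ
      have hwyW : rep (cls y) ∉ W := by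
        intro hw
        have h1 : Submodule.span F {rep (cls y)} = cls y := hrepspan _ hyQ
        obtain ⟨hp1, hp2, hp3⟩ := hpull (rep (cls y)) (hWB hw)
        have hpX : pull (rep (cls y)) ∈ X := by
          rw [hXdef]; exact Finset.mem_image_of_mem pull hw
        have h2 : Submodule.span F {rep (cls y)} = cls (pull (rep (cls y))) := by
          have h2' := hrepspan _ (hclsmem _ hp1)
          rwa [hp3] at h2'
        exact hycls _ hpX (h1.symm.trans h2)
      have hwyspan : rep (cls y) ∈ Submodule.span F (W : Set (Fin n → F)) := by
        obtain ⟨-, c, hc0, hc⟩ := hrepcls y hyS'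
        have hπyW : π y ∈ Submodule.span F (W : Set (Fin n → F)) := by
          have h1 : π y ∈ Submodule.map π (Submodule.span F (X : Set (Fin n → F))) :=
            Submodule.mem_map_of_mem hyspan
          rw [Submodule.map_span] at h1
          refine Submodule.span_le.mpr ?_ h1
          rintro _ ⟨x, hx, rfl⟩
          exact Submodule.subset_span (hXmem x hx).2.1
        rw [hc]
        exact Submodule.smul_mem _ c hπyW
      have hsubset : insert (rep (cls y)) (W : Set (Fin n → F)) ⊆
          (B : Set (Fin n → F)) ∩
            (Submodule.span F (W : Set (Fin n → F)) : Set (Fin n → F)) := by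
        rintro z hz
        rcases Set.mem_insert_iff.mp hz with rfl | hzW
        · exact ⟨hwyB, hwyspan⟩
        · exact ⟨hWB hzW, Submodule.subset_span hzW⟩
      have hfin : ((B : Set (Fin n → F)) ∩
          (Submodule.span F (W : Set (Fin n → F)) : Set (Fin n → F))).Finite :=
        B.finite_toSet.inter_of_left _
      have hins : (insert (rep (cls y)) (W : Set (Fin n → F))).ncard = k + 1 := by
        rw [Set.ncard_insert_of_notMem (by exact_mod_cast hwyW) W.finite_toSet,
          Set.ncard_coe_finset, hWk]
      calc k + 1 = _ := hins.symm
        _ ≤ _ := Set.ncard_le_ncard hsubset hfin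
  -- each class has at least two points, so 2·|B| + 1 ≤ |S|
  have hQcard : 2 * Q.card ≤ S'.card := by
    rw [Finset.card_eq_sum_card_fiberwise (f := cls) (t := Q) hclsmem]
    have h2 : ∀ q ∈ Q, 2 ≤ (S'.filter (fun x => cls x = q)).card := by
      intro q hq
      rw [hQdef, Finset.mem_image] at hq
      obtain ⟨v, hv, hvq⟩ := hq
      obtain ⟨hvS, hvK⟩ := (hS'mem v).mp hv
      obtain ⟨x, hxS, hxsp, hxT, hxv⟩ := hstuck v hvS hvK
      have hxK : x ∉ K := fun hK => hxT (hTprop x hxS hK)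
      have hxS' : x ∈ S' := (hS'mem x).mpr ⟨hxS, hxK⟩
      -- π x ∈ span {π v}
      have hπx : π x ∈ Submodule.span F {π v} := by
        have h1 : π x ∈ Submodule.map π (Submodule.span F (insert v (T : Set (Fin n → F)))) :=
          Submodule.mem_map_of_mem hxsp
        rw [Submodule.map_span] at h1
        refine Submodule.span_le.mpr ?_ h1
        rintro _ ⟨z, hz, rfl⟩
        rcases Set.mem_insert_iff.mp hz with rfl | hzT
        · exact Submodule.mem_span_singleton_self _
        · have : π z = 0 := hπK z (Submodule.subset_span hzT)
          rw [this]
          exact Submodule.zero_mem _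
      obtain ⟨c, hc⟩ := Submodule.mem_span_singleton.mp hπx
      have hc0 : c ≠ 0 := by
        rintro rfl
        rw [zero_smul] at hc
        exact (hπne' x hxS') hc.symm
      have hclsx : cls x = q := by
        rw [← hvq]
        simp only [hclsdef]
        rw [← hc]
        exact Submodule.span_singleton_smul_eq (IsUnit.mk0 c hc0) _
      have hlt : 1 < (S'.filter (fun x => cls x = q)).card := Finset.one_lt_card.mpr
        ⟨x, Finset.mem_filter.mpr ⟨hxS', hclsx⟩, v, Finset.mem_filter.mpr ⟨hv, hvq⟩, hxv⟩
      omega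
    calc 2 * Q.card = ∑ _q ∈ Q, 2 := by rw [Finset.sum_const, smul_eq_mul, mul_comm]
      _ ≤ _ := Finset.sum_le_sum h2
  have hcard2 : 2 * B.card + 1 ≤ S.card := by
    rw [hBcard]
    omega
  -- rank comparison
  have hKS : K ≤ Submodule.span F (S : Set (Fin n → F)) := by
    rw [hKdef]
    exact Submodule.span_mono (by exact_mod_cast hTS)
  have hBspanS : Submodule.span F (B : Set (Fin n → F)) ≤
      Submodule.span F (S : Set (Fin n → F)) := by
    rw [Submodule.span_le]
    intro w hw
    obtain ⟨x, hx, hπxw, -, -⟩ := hBmem w hw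
    have hxS : x ∈ S := hS'sub hx
    have hwx : w = x - (x - π x) := by rw [hπxw]; abel
    rw [hwx]
    exact Submodule.sub_mem _ (Submodule.subset_span hxS) (hKS (hπsub x))
  have hBK' : Submodule.span F (B : Set (Fin n → F)) ≤ K' := by
    rw [Submodule.span_le]
    intro w hw
    obtain ⟨x, hx, hπxw, -, -⟩ := hBmem w hw
    rw [← hπxw]
    exact hπmem x
  have hKBinf : K ⊓ Submodule.span F (B : Set (Fin n → F)) = ⊥ := by
    apply le_antisymm _ bot_le
    refine le_trans (inf_le_inf_left K hBK') ?_
    rw [hKc.inf_eq_bot]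
  have hK1 : 1 ≤ Module.finrank F K := by
    obtain ⟨t, ht⟩ := Finset.card_pos.mp hTpos
    have hle : Submodule.span F {t} ≤ K := by
      rw [hKdef]
      exact Submodule.span_mono (by simpa using ht)
    have h1 := finrank_span_singleton (K := F) (hne t (hTS ht))
    calc 1 = _ := h1.symm
      _ ≤ _ := Submodule.finrank_mono hle
  have hrB : sgRank F B = Module.finrank F (Submodule.span F (B : Set (Fin n → F))) := rfl
  have hbot : Module.finrank F (⊥ : Submodule F (Fin n → F)) = 0 := finrank_bot F _
  have hsum := Submodule.finrank_sup_add_finrank_inf_eq K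
    (Submodule.span F (B : Set (Fin n → F)))
  rw [hKBinf, hbot] at hsum
  have hupper : sgRank F B + 1 ≤ sgRank F S := by
    have hle : K ⊔ Submodule.span F (B : Set (Fin n → F)) ≤
        Submodule.span F (S : Set (Fin n → F)) := sup_le hKS hBspanS
    have h1 := Submodule.finrank_mono (M := Fin n → F) hle
    omega
  have hlower : sgRank F S ≤ (k - 1) + sgRank F B := by
    have hle : Submodule.span F (S : Set (Fin n → F)) ≤
        K ⊔ Submodule.span F (B : Set (Fin n → F)) := by
      rw [Submodule.span_le]
      intro x hx
      have hxS : x ∈ S := hx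
      by_cases hxK : x ∈ K
      · exact Submodule.mem_sup_left hxK
      · have hxS' : x ∈ S' := (hS'mem x).mpr ⟨hxS, hxK⟩
        obtain ⟨hrBm, c, hc0, hc⟩ := hrepcls x hxS'
        have hπxB : π x ∈ Submodule.span F (B : Set (Fin n → F)) := by
          have h1 : π x = c⁻¹ • rep (cls x) := by
            rw [hc, smul_smul, inv_mul_cancel₀ hc0, one_smul]
          rw [h1]
          exact Submodule.smul_mem _ _ (Submodule.subset_span hrBm)
        have h2 : x = (x - π x) + π x := by abel
        rw [h2]
        exact Submodule.add_mem _ (Submodule.mem_sup_left (hπsub x))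
          (Submodule.mem_sup_right hπxB)
    have h1 := Submodule.finrank_mono (M := Fin n → F) hle
    omega
  exact ⟨B, hBsg, hcard2, hlower, hupper⟩


private lemma key_card {n : ℕ} [Field F] (k : ℕ) (hk : 2 ≤ k) :
    ∀ r : ℕ, ∀ S : Finset (Fin n → F), SGClosed F k S → sgRank F S ≤ r →
      1 ≤ sgRank F S → 2 ^ ((sgRank F S - 1) / (k - 1)) ≤ S.card := by
  intro r
  induction r with
  | zero => intro S _ h1 h2; omega
  | succ r ih =>
    intro S hS hle h1
    by_cases hcase : sgRank F S ≤ k - 1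
    · have hz : (sgRank F S - 1) / (k - 1) = 0 := Nat.div_eq_of_lt (by omega)
      rw [hz, pow_zero]
      exact Finset.card_pos.mpr (sg_nonempty h1)
    · have hrk : k ≤ sgRank F S := by omega
      obtain ⟨B, hBsg, hBcard, hlow, hup⟩ := step k hk S hS hrk
      have hB1 : 1 ≤ sgRank F B := by omega
      have hBle : sgRank F B ≤ r := by omega
      have hIH := ih B hBsg hBle hB1
      have hdiv : (sgRank F S - 1) / (k - 1) = (sgRank F S - 1 - (k - 1)) / (k - 1) + 1 :=
        Nat.div_eq_sub_div (by omega) (by omega)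
      have hmono : (sgRank F S - 1 - (k - 1)) / (k - 1) ≤ (sgRank F B - 1) / (k - 1) :=
        Nat.div_le_div_right (by omega)
      have hpw := Nat.pow_le_pow_right (show 1 ≤ 2 by omega) hmono
      calc 2 ^ ((sgRank F S - 1) / (k - 1))
          = 2 * 2 ^ ((sgRank F S - 1 - (k - 1)) / (k - 1)) := by rw [hdiv]; ring
        _ ≤ 2 * 2 ^ ((sgRank F B - 1) / (k - 1)) := by omega
        _ ≤ 2 * B.card := by omega
        _ ≤ S.card := by omega


/-- For any field `F` and `k, m ≥ 2`, every `SG_k`-closed set of at most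
`m` vectors in `F^n` (for any `n`) has rank at most `9·k·log₂ m`. -/
theorem sg_rank_upper_bound {F : Type*} [Field F] (k m : ℕ) (hk : 2 ≤ k) (hm : 2 ≤ m)
    {n : ℕ} (S : Finset (Fin n → F)) (hS : SGClosed F k S) (hcard : S.card ≤ m) :
    (sgRank F S : ℝ) ≤ 9 * (k : ℝ) * Real.logb 2 (m : ℝ) := by
  have hm0 : (0:ℝ) < (m:ℝ) := by exact_mod_cast (by omega : 0 < m)
  have hm1 : (1:ℝ) ≤ (m:ℝ) := by exact_mod_cast (by omega : 1 ≤ m)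
  have hlog0 : 0 ≤ Real.logb 2 (m:ℝ) := Real.logb_nonneg (by norm_num) hm1
  have hlog1 : 1 ≤ Real.logb 2 (m:ℝ) := by
    have h2 : Real.logb 2 (2:ℝ) = 1 := Real.logb_self_eq_one (by norm_num)
    rw [← h2]
    exact (Real.logb_le_logb (by norm_num) (by norm_num) hm0).mpr (by exact_mod_cast hm)
  by_cases h0 : sgRank F S = 0
  · rw [h0]
    push_cast
    have hk0 : (0:ℝ) ≤ (k:ℝ) := by positivity
    nlinarith
  · have h1 : 1 ≤ sgRank F S := by omega
    have hkey := key_card k hk (sgRank F S) S hS le_rfl h1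
    set r := sgRank F S with hrdef
    set e := (r - 1) / (k - 1) with hedef
    have hpow : (2:ℝ) ^ e ≤ (m:ℝ) := by
      have h2 : 2 ^ e ≤ m := le_trans hkey hcard
      exact_mod_cast h2
    have helog : (e:ℝ) ≤ Real.logb 2 (m:ℝ) := by
      have h2 : Real.logb 2 ((2:ℝ) ^ e) = e := by
        rw [Real.logb_pow, Real.logb_self_eq_one (by norm_num), mul_one]
      rw [← h2]
      exact (Real.logb_le_logb (by norm_num) (by positivity) hm0).mpr hpow
    have hre : r ≤ (k - 1) * e + (k - 1) := by
      have hdm := Nat.div_add_mod (r - 1) (k - 1)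
      rw [← hedef] at hdm
      have hmod := Nat.mod_lt (r - 1) (show 0 < k - 1 by omega)
      omega
    have hreR : (r:ℝ) ≤ ((k:ℝ) - 1) * (e:ℝ) + ((k:ℝ) - 1) := by
      have hcast : ((k - 1 : ℕ) : ℝ) = (k:ℝ) - 1 := by
        have : 1 ≤ k := by omega
        push_cast [this]
        ring
      calc (r:ℝ) ≤ (((k - 1) * e + (k - 1) : ℕ) : ℝ) := by exact_mod_cast hre
        _ = ((k:ℝ) - 1) * (e:ℝ) + ((k:ℝ) - 1) := by push_cast [hcast]; ring
    have hkR : (2:ℝ) ≤ (k:ℝ) := by exact_mod_cast hk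
    nlinarith [mul_le_mul_of_nonneg_left helog (show (0:ℝ) ≤ (k:ℝ) - 1 by linarith),
      mul_le_mul_of_nonneg_left hlog1 (show (0:ℝ) ≤ (k:ℝ) - 1 by linarith),
      mul_nonneg (show (0:ℝ) ≤ 7 * (k:ℝ) + 2 by linarith) hlog0]


end SGPaper
end
end

section
/- Let h ∈ R, let f be a multiplication term, and let I be an ideal of R generated by multiplication terms f_1,...,f_m. Then h ∉ ⟨I, f⟩ if and only if there exists g ∈ nod_I(f) such that h ∉ ⟨I, g⟩. -/
open MvPolynomial

noncomputable section

namespace SGPaper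

variable {F : Type*}

section Aux
variable [Field F] {n : ℕ}

/-- toForm as a linear map. -/
def toFormL : (Fin n → F) →ₗ[F] MvPolynomial (Fin n) F where
  toFun := toForm
  map_add' v w := by simp [toForm, add_mul, Finset.sum_add_distrib]
  map_smul' c v := by simp [toForm, Finset.smul_sum, smul_eq_C_mul, mul_assoc]

@[simp] lemma toFormL_apply (v : Fin n → F) : (toFormL v : MvPolynomial (Fin n) F) = toForm v := rfl

lemma toForm_single (i : Fin n) : toForm (Pi.single i (1:F)) = X i := by
  classical
  simp [toForm, Pi.single_apply]

@[simp] lemma coeff_toForm (v : Fin n → F) (i : Fin n) :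
    coeff (Finsupp.single i 1) (toForm v) = v i := by
  classical
  simp [toForm, coeff_sum, coeff_C_mul, coeff_X', Finsupp.single_left_inj]

lemma toForm_eq_zero {v : Fin n → F} (h : toForm v = 0) : v = 0 := by
  funext i
  have := congrArg (coeff (Finsupp.single i 1)) h
  simpa using this

/-- The algebra endomorphism substituting variables according to the linear map `π`. -/
def lsub (π : (Fin n → F) →ₗ[F] (Fin n → F)) :
    MvPolynomial (Fin n) F →ₐ[F] MvPolynomial (Fin n) F :=
  aeval (fun i => toForm (π (Pi.single i 1)))

@[simp] lemma lsub_toForm (π : (Fin n → F) →ₗ[F] (Fin n → F)) (v : Fin n → F) :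
    lsub π (toForm v) = toForm (π v) := by
  classical
  have : (lsub π).toLinearMap ∘ₗ toFormL = toFormL ∘ₗ π := by
    apply (Pi.basisFun F (Fin n)).ext
    intro i
    simp [toForm_single, lsub]
  exact congrFun (congrArg (fun f => f.toFun) this) v

lemma lsub_mTerm (π : (Fin n → F) →ₗ[F] (Fin n → F)) (c : F) (S : Multiset (Fin n → F)) :
    lsub π (mTerm c S) = mTerm c (S.map π) := by
  simp only [mTerm, map_mul, algHom_C, map_multiset_prod, Multiset.map_map]
  congr 2
  simp [Function.comp_def]

lemma lsub_mTerm_fix {π : (Fin n → F) →ₗ[F] (Fin n → F)} {c : F} {S : Multiset (Fin n → F)}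
    (h : ∀ v ∈ S, π v = v) : lsub π (mTerm c S) = mTerm c S := by
  rw [lsub_mTerm]
  congr 1
  rw [Multiset.map_congr rfl h, Multiset.map_id']

lemma sub_lsub_mem {π : (Fin n → F) →ₗ[F] (Fin n → F)} {b : Fin n → F}
    (hπ : ∀ v, v - π v ∈ Submodule.span F {b}) (u : MvPolynomial (Fin n) F) :
    u - lsub π u ∈ Ideal.span {toForm b} := by
  classical
  have key : (Ideal.Quotient.mkₐ F (Ideal.span {toForm b})) =
      (Ideal.Quotient.mkₐ F (Ideal.span {toForm b})).comp (lsub π) := by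
    apply MvPolynomial.algHom_ext
    intro i
    simp only [Ideal.Quotient.mkₐ_eq_mk, AlgHom.comp_apply, lsub, aeval_X]
    rw [Ideal.Quotient.eq]
    have := hπ (Pi.single i (1:F))
    rw [Submodule.mem_span_singleton] at this
    obtain ⟨c, hc⟩ := this
    rw [show (X i : MvPolynomial (Fin n) F) = toForm (Pi.single i 1) from (toForm_single i).symm,
      show (toForm (Pi.single i 1) : MvPolynomial (Fin n) F) - toForm (π (Pi.single i 1))
        = toFormL (Pi.single i (1:F) - π (Pi.single i 1)) from by rw [map_sub]; rfl,
      show Pi.single i (1:F) - π (Pi.single i 1) = c • b from hc.symm]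
    apply Ideal.mem_span_singleton'.mpr
    exact ⟨C c, by simp [map_smul, smul_eq_C_mul]⟩
  have h2 : Ideal.Quotient.mk (Ideal.span {toForm b}) u
      = Ideal.Quotient.mk (Ideal.span {toForm b}) (lsub π u) := by
    have := congrFun (congrArg (fun f => f.toFun) key) u
    simpa using this
  exact Ideal.Quotient.eq.mp h2

/-- If the generators are fixed by `lsub π`, the ideal is mapped into itself. -/
lemma lsub_mem_span {π : (Fin n → F) →ₗ[F] (Fin n → F)} {G : Set (MvPolynomial (Fin n) F)}
    (hG : ∀ g ∈ G, lsub π g = g) {u : MvPolynomial (Fin n) F} (hu : u ∈ Ideal.span G) :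
    lsub π u ∈ Ideal.span G := by
  have : lsub π u ∈ Ideal.map (lsub π) (Ideal.span G) := Ideal.mem_map_of_mem _ hu
  rw [Ideal.map_span] at this
  refine Ideal.span_mono ?_ this
  rintro x ⟨g, hg, rfl⟩
  rw [hG g hg]; exact hg

/-- Key cancellation: if `π` kills `b`, fixes the generators, and moves every vector
by a multiple of `b`, then `toForm b` is a nonzerodivisor modulo the ideal. -/
lemma cancel_form {π : (Fin n → F) →ₗ[F] (Fin n → F)} {b : Fin n → F} (hb : b ≠ 0)
    (hπb : π b = 0) (hmove : ∀ v, v - π v ∈ Submodule.span F {b})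
    {G : Set (MvPolynomial (Fin n) F)} (hG : ∀ g ∈ G, lsub π g = g)
    {w : MvPolynomial (Fin n) F} (hw : w * toForm b ∈ Ideal.span G) :
    w ∈ Ideal.span G := by
  classical
  -- every element i of span G satisfies i - lsub π i = toForm b * u with u ∈ span G
  have main : ∀ i ∈ Ideal.span G, ∃ u ∈ Ideal.span G, i - lsub π i = toForm b * u := by
    intro i hi
    induction hi using Submodule.span_induction with
    | mem g hg => exact ⟨0, Ideal.zero_mem _, by rw [hG g hg]; ring⟩
    | zero => exact ⟨0, Ideal.zero_mem _, by simp⟩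
    | add x y hx hy ihx ihy =>
      obtain ⟨u, hu, hu'⟩ := ihx; obtain ⟨u', hu'', hu'''⟩ := ihy
      refine ⟨u + u', Ideal.add_mem _ hu hu'', ?_⟩
      have : x + y - lsub π (x + y) = (x - lsub π x) + (y - lsub π y) := by
        rw [map_add]; ring
      rw [this, hu', hu''']; ring
    | smul r x hx ihx =>
      obtain ⟨u, hu, hu'⟩ := ihx
      obtain ⟨s, hs⟩ := Ideal.mem_span_singleton'.mp (sub_lsub_mem hmove r)
      refine ⟨r * u + s * lsub π x, ?_, ?_⟩
      · exact Ideal.add_mem _ (Ideal.mul_mem_left _ _ hu)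
          (Ideal.mul_mem_left _ _ (lsub_mem_span hG hx))
      · have : (r : MvPolynomial (Fin n) F) - lsub π r = s * toForm b := hs.symm
        calc r • x - lsub π (r • x) = r * (x - lsub π x) + (r - lsub π r) * lsub π x := by
              simp [smul_eq_mul, map_mul]; ring
          _ = toForm b * (r * u + s * lsub π x) := by rw [hu', this]; ring
  obtain ⟨u, hu, hu'⟩ := main _ hw
  have hπw : lsub π (w * toForm b) = 0 := by
    rw [map_mul, lsub_toForm, hπb]
    simp [toForm]
  rw [hπw, sub_zero] at hu'
  have htb : toForm b ≠ 0 := fun h => hb (toForm_eq_zero h)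
  have : w = u := by
    have := hu'
    rw [mul_comm (toForm b) u] at this
    exact mul_right_cancel₀ htb this
  rwa [this]

/-- A functional vanishing on `W` and equal to `1` on `b ∉ W`. -/
lemma exists_functional {W : Submodule F (Fin n → F)} {b : Fin n → F} (hb : b ∉ W) :
    ∃ g : (Fin n → F) →ₗ[F] F, g b = 1 ∧ ∀ v ∈ W, g v = 0 := by
  classical
  have hqb : W.mkQ b ≠ 0 := by
    simp [Submodule.Quotient.mk_eq_zero, hb]
  obtain ⟨U, hU⟩ := (Submodule.span F {W.mkQ b}).exists_isCompl
  let pr := Submodule.linearProjOfIsCompl _ _ hU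
  let e := LinearEquiv.toSpanNonzeroSingleton F ((Fin n → F) ⧸ W) (W.mkQ b) hqb
  let q := W.mkQ
  refine ⟨(e.symm.toLinearMap.comp pr).comp q, ?_, ?_⟩
  · have h1 : pr (q b) = ⟨q b, Submodule.mem_span_singleton_self _⟩ :=
      Submodule.linearProjOfIsCompl_apply_left hU ⟨q b, Submodule.mem_span_singleton_self _⟩
    have h2 : e 1 = ⟨q b, Submodule.mem_span_singleton_self _⟩ :=
      LinearEquiv.toSpanNonzeroSingleton_one F _ (W.mkQ b) hqb
    simp only [LinearMap.comp_apply, h1, ← h2]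
    exact e.symm_apply_apply 1
  · intro v hv
    have hq : q v = 0 := by
      simp only [q, Submodule.mkQ_apply, Submodule.Quotient.mk_eq_zero]
      exact hv
    simp only [LinearMap.comp_apply, hq, map_zero]

/-- Projection along `b`: kills `b`, fixes `W`, and moves everything by a multiple of `b`. -/
lemma exists_proj {W : Submodule F (Fin n → F)} {b : Fin n → F} (hb : b ∉ W) :
    ∃ π : (Fin n → F) →ₗ[F] (Fin n → F), π b = 0 ∧ (∀ v ∈ W, π v = v) ∧
      ∀ v, v - π v ∈ Submodule.span F {b} := by
  obtain ⟨g, hgb, hgW⟩ := exists_functional hb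
  refine ⟨LinearMap.id - (LinearMap.smulRight g b), ?_, ?_, ?_⟩
  · simp [hgb]
  · intro v hv; simp [hgW v hv]
  · intro v
    simp only [LinearMap.sub_apply, LinearMap.id_apply, LinearMap.smulRight_apply, sub_sub_cancel]
    exact Submodule.smul_mem _ _ (Submodule.mem_span_singleton_self _)

lemma mTerm_cons (c : F) (b : Fin n → F) (S : Multiset (Fin n → F)) :
    mTerm c (b ::ₘ S) = toForm b * mTerm c S := by
  simp [mTerm]; ring

lemma mTerm_add (c : F) (S T : Multiset (Fin n → F)) :
    mTerm c (S + T) = mTerm c S * mTerm 1 T := by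
  simp [mTerm]; ring

lemma mem_sup_span_singleton {R : Type*} [CommRing R] {I : Ideal R} {g x : R} :
    x ∈ I ⊔ Ideal.span {g} ↔ ∃ i ∈ I, ∃ r, x = i + r * g := by
  rw [Submodule.mem_sup]
  constructor
  · rintro ⟨i, hi, y, hy, rfl⟩
    obtain ⟨r, rfl⟩ := Ideal.mem_span_singleton'.mp hy
    exact ⟨i, hi, r, rfl⟩
  · rintro ⟨i, hi, r, rfl⟩
    exact ⟨i, hi, r * g, Ideal.mem_span_singleton'.mpr ⟨r, rfl⟩, rfl⟩

lemma lam_ne_zero {V : Submodule F (Fin n → F)} {lam : Fin n → F} (hlam : lam ∉ V) : lam ≠ 0 :=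
  fun h => hlam (h ▸ V.zero_mem)

/-- Claim C: cancellation of a form `lam ∉ V` modulo `I + (B)`. -/
lemma claimC {V : Submodule F (Fin n → F)} {gens : Set (MvPolynomial (Fin n) F)}
    (hgens : ∀ g ∈ gens, ∃ c S, g = mTerm c S ∧ ∀ v ∈ S, v ∈ V)
    {lam : Fin n → F} (hlam : lam ∉ V) :
    ∀ B : Multiset (Fin n → F), (∀ b ∈ B, b ∈ V ∨ b ∉ V ⊔ Submodule.span F {lam}) →
    ∀ w, w * toForm lam ∈ Ideal.span gens ⊔ Ideal.span {mTerm 1 B} →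
      w ∈ Ideal.span gens ⊔ Ideal.span {mTerm 1 B} := by
  classical
  have fixgens : ∀ π : (Fin n → F) →ₗ[F] (Fin n → F), (∀ v ∈ V, π v = v) →
      ∀ g ∈ gens, lsub π g = g := by
    intro π hπ g hg
    obtain ⟨c, S, rfl, hS⟩ := hgens g hg
    exact lsub_mTerm_fix (fun v hv => hπ v (hS v hv))
  intro B
  induction B using Multiset.strongInductionOn with
  | _ B ihB =>
  intro hB w hw
  by_cases hall : ∀ b ∈ B, b ∈ V
  · -- base case: all forms of B lie in V
    rw [← Ideal.span_union] at hw ⊢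
    obtain ⟨π, hπb, hπfix, hπmove⟩ := exists_proj hlam
    refine cancel_form (lam_ne_zero hlam) hπb hπmove ?_ hw
    rintro g (hg | hg)
    · exact fixgens π hπfix g hg
    · rw [Set.mem_singleton_iff] at hg
      subst hg
      exact lsub_mTerm_fix (fun v hv => hπfix v (hall v hv))
  · -- inductive step: pick b ∈ B with b ∉ V
    push_neg at hall
    obtain ⟨b, hbB, hbV⟩ := hall
    have hbW : b ∉ V ⊔ Submodule.span F {lam} := (hB b hbB).resolve_left hbV
    set B' := B.erase b with hB'def
    have hBeq : B = b ::ₘ B' := (Multiset.cons_erase hbB).symm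
    have hMB : mTerm 1 B = toForm b * mTerm 1 B' := by rw [hBeq, mTerm_cons]
    have hlamW : lam ∈ V ⊔ Submodule.span F {lam} :=
      Submodule.mem_sup_right (Submodule.mem_span_singleton_self _)
    obtain ⟨π₁, hπ₁b, hπ₁fix, hπ₁move⟩ := exists_proj hbW
    obtain ⟨π₂, hπ₂lam, hπ₂fix, hπ₂move⟩ := exists_proj hlam
    obtain ⟨π₃, hπ₃b, hπ₃fix, hπ₃move⟩ := exists_proj (W := V) hbV
    obtain ⟨i, hi, r, heq⟩ := mem_sup_span_singleton.mp hw
    -- step (i): φ₁ w * lam ∈ I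
    have hfix1 : ∀ g ∈ gens, lsub π₁ g = g :=
      fixgens π₁ (fun v hv => hπ₁fix v (Submodule.mem_sup_left hv))
    have h0 : toForm (0 : Fin n → F) = 0 := by simpa using (map_zero toFormL)
    have hstep1 : lsub π₁ w * toForm lam ∈ Ideal.span gens := by
      have := congrArg (lsub π₁) heq
      rw [map_mul, lsub_toForm, hπ₁fix lam hlamW, map_add, hMB, map_mul, map_mul,
        lsub_toForm, hπ₁b, h0, zero_mul, mul_zero, add_zero] at this
      rw [this]
      exact lsub_mem_span hfix1 hi
    have hφw : lsub π₁ w ∈ Ideal.span gens :=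
      cancel_form (lam_ne_zero hlam) hπ₂lam hπ₂move (fixgens π₂ hπ₂fix) hstep1
    -- step (ii): w = φ₁ w + toForm b * w₁
    obtain ⟨w₁, hw₁⟩ := Ideal.mem_span_singleton'.mp (sub_lsub_mem hπ₁move w)
    -- step (iii)
    have ht : w₁ * toForm b * toForm lam ∈
        Ideal.span gens ⊔ Ideal.span {mTerm 1 B} := by
      have : w₁ * toForm b * toForm lam = w * toForm lam - lsub π₁ w * toForm lam := by
        rw [← sub_mul, hw₁]
      rw [this]
      exact Submodule.sub_mem _ hw (Submodule.mem_sup_left hstep1)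
    obtain ⟨i', hi', r', heq'⟩ := mem_sup_span_singleton.mp ht
    have hIb : (w₁ * toForm lam - r' * mTerm 1 B') * toForm b ∈ Ideal.span gens := by
      have h3 : i' = w₁ * toForm b * toForm lam - r' * mTerm 1 B := by
        rw [heq']; ring
      have : (w₁ * toForm lam - r' * mTerm 1 B') * toForm b = i' := by
        rw [h3, hMB]; ring
      rw [this]; exact hi'
    have hIc : w₁ * toForm lam - r' * mTerm 1 B' ∈ Ideal.span gens :=
      cancel_form (lam_ne_zero hbV) hπ₃b hπ₃move (fixgens π₃ hπ₃fix) hIb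
    have hw₁lam : w₁ * toForm lam ∈ Ideal.span gens ⊔ Ideal.span {mTerm 1 B'} :=
      mem_sup_span_singleton.mpr ⟨_, hIc, r', by ring⟩
    -- step (iv): apply the inductive hypothesis to B'
    have hB'lt : B' < B := by
      rw [hBeq]; exact Multiset.lt_cons_self _ _
    have hB' : ∀ b' ∈ B', b' ∈ V ∨ b' ∉ V ⊔ Submodule.span F {lam} :=
      fun b' hb' => hB b' (Multiset.mem_of_mem_erase hb')
    have hw₁mem : w₁ ∈ Ideal.span gens ⊔ Ideal.span {mTerm 1 B'} := ihB B' hB'lt hB' w₁ hw₁lam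
    obtain ⟨i'', hi'', s, heq''⟩ := mem_sup_span_singleton.mp hw₁mem
    refine mem_sup_span_singleton.mpr ⟨lsub π₁ w + toForm b * i'', ?_, s, ?_⟩
    · exact Ideal.add_mem _ hφw (Ideal.mul_mem_left _ _ hi'')
    · linear_combination -hw₁ + toForm b * heq'' - s * hMB

section simRelFacts
variable {K : Submodule F (Fin n → F)}

lemma simRel_refl (a : Fin n → F) : simRel K a a := ⟨1, one_ne_zero, by simp⟩

lemma simRel_trans {a b c : Fin n → F} (h1 : simRel K a b) (h2 : simRel K b c) :
    simRel K a c := by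
  obtain ⟨c1, hc1, h1⟩ := h1
  obtain ⟨c2, hc2, h2⟩ := h2
  refine ⟨c2 * c1, mul_ne_zero hc2 hc1, ?_⟩
  have := K.add_mem h2 (K.smul_mem c2 h1)
  convert this using 1
  module

lemma simRel_symm {a b : Fin n → F} (h : simRel K a b) : simRel K b a := by
  obtain ⟨c, hc, h⟩ := h
  refine ⟨c⁻¹, inv_ne_zero hc, ?_⟩
  have := K.smul_mem (-c⁻¹) h
  convert this using 1
  match_scalars <;> field_simp

lemma simRel_of_mem {a b : Fin n → F} (ha : a ∈ K) (hb : b ∈ K) : simRel K a b :=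
  ⟨1, one_ne_zero, K.sub_mem hb (by simpa using ha)⟩

lemma not_mem_of_simRel {a b : Fin n → F} (ha : a ∉ K) (h : simRel K a b) : b ∉ K := by
  obtain ⟨c, hc, h⟩ := h
  intro hb
  exact ha (by simpa [hc] using K.smul_mem c⁻¹ (K.sub_mem hb h))

lemma alt_of_not_simRel {lam b : Fin n → F} (h : ¬ simRel K lam b) :
    b ∈ K ∨ b ∉ K ⊔ Submodule.span F {lam} := by
  by_cases hbK : b ∈ K
  · exact Or.inl hbK
  · refine Or.inr fun hmem => ?_
    rw [Submodule.mem_sup] at hmem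
    obtain ⟨y, hy, z, hz, hyz⟩ := hmem
    obtain ⟨c, rfl⟩ := Submodule.mem_span_singleton.mp hz
    rcases eq_or_ne c 0 with rfl | hc
    · refine hbK ?_
      rw [← hyz]
      simpa using hy
    · exact h ⟨c, hc, by rw [← hyz]; simpa using hy⟩

end simRelFacts

lemma cancel_multiset {V : Submodule F (Fin n → F)} {gens : Set (MvPolynomial (Fin n) F)}
    (hgens : ∀ g ∈ gens, ∃ c S, g = mTerm c S ∧ ∀ v ∈ S, v ∈ V) {B : Multiset (Fin n → F)} :
    ∀ T : Multiset (Fin n → F),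
      (∀ x ∈ T, x ∉ V ∧ ∀ b ∈ B, b ∈ V ∨ b ∉ V ⊔ Submodule.span F {x}) →
    ∀ w, w * mTerm 1 T ∈ Ideal.span gens ⊔ Ideal.span {mTerm 1 B} →
      w ∈ Ideal.span gens ⊔ Ideal.span {mTerm 1 B} := by
  intro T
  induction T using Multiset.induction with
  | empty =>
    intro _ w hw
    simpa [mTerm] using hw
  | cons x T ih =>
    intro hT w hw
    have hx := hT x (Multiset.mem_cons_self x T)
    have h1 : (w * mTerm 1 T) * toForm x ∈ Ideal.span gens ⊔ Ideal.span {mTerm 1 B} := by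
      have : (w * mTerm 1 T) * toForm x = w * mTerm 1 (x ::ₘ T) := by
        rw [mTerm_cons]; ring
      rwa [this]
    have h2 := claimC hgens hx.1 B hx.2 _ h1
    exact ih (fun y hy => hT y (Multiset.mem_cons_of_mem hy)) w h2

open scoped Classical in
lemma aux_main {V : Submodule F (Fin n → F)} {gens : Set (MvPolynomial (Fin n) F)}
    (hgens : ∀ g ∈ gens, ∃ c S, g = mTerm c S ∧ ∀ v ∈ S, v ∈ V)
    (h : MvPolynomial (Fin n) F) :
    ∀ N : ℕ, ∀ Sf : Multiset (Fin n → F), Sf.card ≤ N →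
      (∀ a ∈ Sf, h ∈ Ideal.span gens ⊔ Ideal.span {mTerm 1 (Sf.filter (simRel V a))}) →
      h ∈ Ideal.span gens ⊔ Ideal.span {mTerm 1 Sf} := by
  intro N
  induction N with
  | zero =>
    intro Sf hcard _
    rw [Multiset.card_eq_zero.mp (Nat.le_zero.mp hcard)]
    have : mTerm (1:F) (0 : Multiset (Fin n → F)) = 1 := by simp [mTerm]
    rw [this]
    exact Submodule.mem_sup_right (by simp [Ideal.span_singleton_one])
  | succ N ihN =>
    intro Sf hcard hyp
    rcases Multiset.empty_or_exists_mem Sf with rfl | ⟨a₀, ha₀⟩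
    · have : mTerm (1:F) (0 : Multiset (Fin n → F)) = 1 := by simp [mTerm]
      rw [this]
      exact Submodule.mem_sup_right (by simp [Ideal.span_singleton_one])
    by_cases hallV : ∀ a ∈ Sf, a ∈ V
    · -- single class: everything is similar to a₀
      have hfil : Sf.filter (simRel V a₀) = Sf :=
        Multiset.filter_eq_self.mpr fun b hb => simRel_of_mem (hallV a₀ ha₀) (hallV b hb)
      have := hyp a₀ ha₀
      rwa [hfil] at this
    · push_neg at hallV
      obtain ⟨a₁, ha₁Sf, ha₁V⟩ := hallV
      set S₁ := Sf.filter (simRel V a₁) with hS₁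
      set S₂ := Sf.filter (fun b => ¬ simRel V a₁ b) with hS₂
      have hsplit : S₁ + S₂ = Sf := Multiset.filter_add_not _ _
      have ha₁S₁ : a₁ ∈ S₁ := Multiset.mem_filter.mpr ⟨ha₁Sf, simRel_refl a₁⟩
      have hcard2 : S₂.card ≤ N := by
        have h1 : S₁.card + S₂.card = Sf.card := by rw [← hsplit, Multiset.card_add]
        have h2 : 0 < S₁.card := Multiset.card_pos.mpr (fun h0 => by simp [h0] at ha₁S₁)
        omega
      -- h lies in I + (product of the other classes)
      have hypS₂ : ∀ a ∈ S₂, h ∈ Ideal.span gens ⊔ Ideal.span {mTerm 1 (S₂.filter (simRel V a))} := by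
        intro a haS₂
        have haSf : a ∈ Sf := Multiset.mem_of_mem_filter haS₂
        have hnot : ¬ simRel V a₁ a := (Multiset.mem_filter.mp haS₂).2
        have hfilS₁ : S₁.filter (simRel V a) = 0 := by
          rw [Multiset.filter_eq_nil]
          intro x hxS₁ hsim
          exact hnot (simRel_trans (Multiset.mem_filter.mp hxS₁).2 (simRel_symm hsim))
        have : Sf.filter (simRel V a) = S₂.filter (simRel V a) := by
          rw [← hsplit, Multiset.filter_add, hfilS₁, zero_add]
        have h2 := hyp a haSf
        rwa [this] at h2
      have hS₂mem : h ∈ Ideal.span gens ⊔ Ideal.span {mTerm 1 S₂} := ihN S₂ hcard2 hypS₂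
      -- h = i + q * M₁ with the class of a₁
      obtain ⟨i, hi, q, hq⟩ := mem_sup_span_singleton.mp (hyp a₁ ha₁Sf)
      have hqM₁ : q * mTerm 1 S₁ ∈ Ideal.span gens ⊔ Ideal.span {mTerm 1 S₂} := by
        have : q * mTerm 1 S₁ = h - i := by rw [hq]; ring
        rw [this]
        exact Submodule.sub_mem _ hS₂mem (Submodule.mem_sup_left hi)
      -- cancel the forms of S₁
      have hT : ∀ x ∈ S₁, x ∉ V ∧ ∀ b ∈ S₂, b ∈ V ∨ b ∉ V ⊔ Submodule.span F {x} := by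
        intro x hxS₁
        have hsim : simRel V a₁ x := (Multiset.mem_filter.mp hxS₁).2
        have hxV : x ∉ V := not_mem_of_simRel ha₁V hsim
        refine ⟨hxV, fun b hbS₂ => ?_⟩
        refine alt_of_not_simRel fun hsimxb => ?_
        exact (Multiset.mem_filter.mp hbS₂).2 (simRel_trans hsim hsimxb)
      have hqmem := cancel_multiset hgens S₁ hT q hqM₁
      obtain ⟨i', hi', s, hs⟩ := mem_sup_span_singleton.mp hqmem
      refine mem_sup_span_singleton.mpr ⟨i + i' * mTerm 1 S₁, ?_, s, ?_⟩
      · exact Ideal.add_mem _ hi (Ideal.mul_mem_right _ _ hi')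
      · have hM : mTerm (1:F) Sf = mTerm 1 S₁ * mTerm 1 S₂ := by
          rw [← hsplit, mTerm_add]
        rw [hq, hs, hM]; ring


lemma mTerm_C_mul [Field F] {n : ℕ} (c : F) (S : Multiset (Fin n → F)) :
    mTerm c S = MvPolynomial.C c * mTerm 1 S := by
  simp [mTerm]

end Aux

open scoped Classical in
/-- `h ∉ ⟨I, f⟩` iff `h ∉ ⟨I, g⟩` for some node `g ∈ nod_I(f)`, the nodes
being the products of the similarity classes (mod `radsp(I)`) of the forms of `f`. -/
theorem not_mem_iff_exists_node {F : Type*} [Field F] {n m : ℕ}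
    (cI : Fin m → F) (SI : Fin m → Multiset (Fin n → F))
    (hcI : ∀ i, cI i ≠ 0) (hSI : ∀ i, ∀ v ∈ SI i, v ≠ 0)
    (cf : F) (Sf : Multiset (Fin n → F)) (hcf : cf ≠ 0) (hSf : ∀ v ∈ Sf, v ≠ 0)
    (h : MvPolynomial (Fin n) F) :
    h ∉ Ideal.span (Set.range fun i => mTerm (cI i) (SI i)) ⊔ Ideal.span {mTerm cf Sf} ↔
      ∃ a ∈ Sf, h ∉ Ideal.span (Set.range fun i => mTerm (cI i) (SI i)) ⊔
        Ideal.span {mTerm 1 (Sf.filter (simRel (radsp F (∑ i, SI i)) a))} := by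
  classical
  set V := radsp F (∑ i, SI i) with hV
  set gens : Set (MvPolynomial (Fin n) F) := Set.range fun i => mTerm (cI i) (SI i) with hgensdef
  have hgens : ∀ g ∈ gens, ∃ c S, g = mTerm c S ∧ ∀ v ∈ S, v ∈ V := by
    rintro g ⟨i, rfl⟩
    refine ⟨cI i, SI i, rfl, fun v hv => ?_⟩
    apply Submodule.subset_span
    exact Multiset.mem_sum.mpr ⟨i, Finset.mem_univ i, hv⟩
  have hspan_eq : Ideal.span {mTerm cf Sf} = Ideal.span {mTerm (1:F) Sf} := by
    apply le_antisymm <;> rw [Ideal.span_le, Set.singleton_subset_iff] <;>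
      apply Ideal.mem_span_singleton'.mpr
    · exact ⟨C cf, (mTerm_C_mul cf Sf).symm⟩
    · refine ⟨C cf⁻¹, ?_⟩
      rw [mTerm_C_mul cf Sf, ← mul_assoc, ← C_mul, inv_mul_cancel₀ hcf, C_1, one_mul]
  constructor
  · intro hns
    by_contra hcon
    push_neg at hcon
    have := aux_main hgens h Sf.card Sf le_rfl hcon
    rw [hspan_eq] at hns
    exact hns this
  · rintro ⟨a, haSf, hna⟩ hmem
    apply hna
    have hle : Ideal.span gens ⊔ Ideal.span {mTerm cf Sf} ≤
        Ideal.span gens ⊔ Ideal.span {mTerm 1 (Sf.filter (simRel V a))} := by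
      apply sup_le_sup_left
      rw [Ideal.span_le, Set.singleton_subset_iff]
      have hsplit : Sf.filter (fun b => ¬ simRel V a b) + Sf.filter (simRel V a) = Sf := by
        rw [add_comm]; exact Multiset.filter_add_not _ _
      apply Ideal.mem_span_singleton'.mpr
      refine ⟨mTerm cf (Sf.filter fun b => ¬ simRel V a b), ?_⟩
      rw [← mTerm_add, hsplit]
    exact hle hmem


end SGPaper
end
end

section
/- Let k ≥ 2 and let 𝔓 be a collection (multiset) of at least k − 1 non-trivial partitions of {1,...,k} with the splitting property. Then there is a chain A_1,...,A_{k−1} in 𝔓 such that the complement {1,...,k} \ (A_1 ∪ ... ∪ A_{k−1}) equals {k}. -/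
open MvPolynomial

noncomputable section

namespace SGPaper

variable {F : Type*}

open scoped Classical in
/-- A collection of at least `k − 1` non-trivial partitions of `{1,...,k}`
(here `Fin k`, `k ≥ 2`) with the splitting property contains a chain `A_1,...,A_{k−1}` whose
complement is exactly the singleton of the last element. -/
theorem splitting_property_chain (k : ℕ) (hk : 2 ≤ k) (N : ℕ) (hN : k - 1 ≤ N)
    (P : Fin N → Finpartition (Finset.univ : Finset (Fin k)))
    (hPnt : ∀ i, (P i).parts ≠ {Finset.univ})
    (hsplit : ∀ S : Finset (Fin k), S.Nonempty → S ≠ Finset.univ →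
      S.card - 1 ≤ (Finset.univ.filter fun i => Splits (P i) S).card) :
    ∃ ι : Fin (k - 1) → Fin N, Function.Injective ι ∧
      ∃ A : Fin (k - 1) → Finset (Fin k), (∀ t, A t ∈ (P (ι t)).parts) ∧
        Finset.univ \ Finset.univ.biUnion A = {(⟨k - 1, by omega⟩ : Fin k)} := by
  classical
  set x : Fin k := ⟨k - 1, by omega⟩ with hxdef
  have hxu : x ∈ (Finset.univ : Finset (Fin k)) := Finset.mem_univ x
  -- every part containing x misses some point
  have hmiss : ∀ i : Fin N, ∃ z : Fin k, z ∉ (P i).part x := by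
    intro i
    by_contra h
    push_neg at h
    apply hPnt i
    have hpartx : (P i).part x = Finset.univ := by
      apply Finset.eq_univ_iff_forall.mpr h
    rw [Finset.eq_singleton_iff_unique_mem]
    refine ⟨by have := (P i).part_mem.mpr hxu; rwa [hpartx] at this, ?_⟩
    intro Y hY
    obtain ⟨a, ha⟩ := (P i).nonempty_of_mem_parts hY
    have := (P i).eq_of_mem_parts hY ((P i).part_mem.mpr hxu) ha (h a)
    rw [this, hpartx]
  -- the embedding of Fin (k-1) into Fin k
  have hemb : ∀ j : Fin (k - 1), (j : ℕ) < k := fun j => lt_of_lt_of_le j.2 (by omega)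
  set emb : Fin (k - 1) → Fin k := fun j => ⟨(j : ℕ), hemb j⟩ with hembdef
  have hembinj : Function.Injective emb := by
    intro a b hab
    exact Fin.ext (by simpa [hembdef] using congrArg Fin.val hab)
  have hembne : ∀ j, emb j ≠ x := by
    intro j h
    have := congrArg Fin.val h
    simp only [hembdef, hxdef] at this
    omega
  -- the bipartite system for Hall's theorem
  set t : Fin (k - 1) → Finset (Fin N) :=
    fun j => Finset.univ.filter (fun i => emb j ∉ (P i).part x) with htdef
  have hall : ∀ s : Finset (Fin (k - 1)), s.card ≤ (s.biUnion t).card := by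
    intro s
    rcases Finset.eq_empty_or_nonempty s with rfl | hsne
    · simp
    set W : Finset (Fin k) := s.image emb with hWdef
    have hxW : x ∉ W := by
      intro hx
      obtain ⟨j, _, hj⟩ := Finset.mem_image.mp hx
      exact hembne j hj
    have hWcard : W.card = s.card := Finset.card_image_of_injective s hembinj
    set T : Finset (Fin k) := insert x W with hTdef
    have hTcard : T.card = s.card + 1 := by
      rw [hTdef, Finset.card_insert_of_notMem hxW, hWcard]
    by_cases hTu : T = Finset.univ
    · -- then every partition separates some element of W from x
      have hbu : s.biUnion t = Finset.univ := by
        apply Finset.eq_univ_iff_forall.mpr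
        intro i
        obtain ⟨z, hz⟩ := hmiss i
        have hzx : z ≠ x := fun h => hz (by rw [h]; exact (P i).mem_part hxu)
        have hzW : z ∈ W := by
          have : z ∈ T := hTu ▸ Finset.mem_univ z
          rcases Finset.mem_insert.mp this with h | h
          · exact absurd h hzx
          · exact h
        obtain ⟨j, hjs, hj⟩ := Finset.mem_image.mp hzW
        exact Finset.mem_biUnion.mpr ⟨j, hjs, Finset.mem_filter.mpr
          ⟨Finset.mem_univ _, by rw [hj]; exact hz⟩⟩
      rw [hbu]
      calc s.card ≤ Fintype.card (Fin (k - 1)) := Finset.card_le_univ s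
        _ = k - 1 := Fintype.card_fin _
        _ ≤ N := hN
        _ = (Finset.univ : Finset (Fin N)).card := by simp
    · -- use the splitting property on T
      have hTne : T.Nonempty := ⟨x, Finset.mem_insert_self x W⟩
      have hsub : (Finset.univ.filter fun i => Splits (P i) T) ⊆ s.biUnion t := by
        intro i hi
        obtain ⟨X, hX, ⟨a, ha⟩, hns⟩ := (Finset.mem_filter.mp hi).2
        have key : ∃ j ∈ s, emb j ∉ (P i).part x := by
          by_contra h
          push_neg at h
          have hTsub : T ⊆ (P i).part x := by
            intro z hz
            rcases Finset.mem_insert.mp hz with rfl | hz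
            · exact (P i).mem_part hxu
            · obtain ⟨j, hjs, hj⟩ := Finset.mem_image.mp hz
              exact hj ▸ h j hjs
          have haX : a ∈ X := (Finset.mem_inter.mp ha).1
          have haT : a ∈ T := (Finset.mem_inter.mp ha).2
          have hXeq : X = (P i).part x :=
            (P i).eq_of_mem_parts hX ((P i).part_mem.mpr hxu) haX (hTsub haT)
          exact hns (hXeq ▸ hTsub)
        obtain ⟨j, hjs, hj⟩ := key
        exact Finset.mem_biUnion.mpr ⟨j, hjs, Finset.mem_filter.mpr ⟨Finset.mem_univ _, hj⟩⟩
      have := hsplit T hTne hTu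
      calc s.card = T.card - 1 := by omega
        _ ≤ (Finset.univ.filter fun i => Splits (P i) T).card := this
        _ ≤ (s.biUnion t).card := Finset.card_le_card hsub
  obtain ⟨f, hfinj, hft⟩ := (Finset.all_card_le_biUnion_card_iff_exists_injective t).mp hall
  refine ⟨f, hfinj, fun j => (P (f j)).part (emb j), fun j => (P (f j)).part_mem.mpr (Finset.mem_univ _), ?_⟩
  have hxA : ∀ j, x ∉ (P (f j)).part (emb j) := by
    intro j hx
    have h1 : emb j ∉ (P (f j)).part x := (Finset.mem_filter.mp (hft j)).2
    have h2 : (P (f j)).part x = (P (f j)).part (emb j) :=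
      (P (f j)).part_eq_of_mem ((P (f j)).part_mem.mpr (Finset.mem_univ _)) hx
    exact h1 (h2 ▸ (P (f j)).mem_part (Finset.mem_univ _))
  ext z
  rw [Finset.mem_singleton]
  constructor
  · intro hz
    have hz2 : ∀ j : Fin (k - 1), z ∉ (P (f j)).part (emb j) := by
      intro j hj
      exact (Finset.mem_sdiff.mp hz).2
        (Finset.mem_biUnion.mpr ⟨j, Finset.mem_univ _, hj⟩)
    by_contra hzx
    have hz3 := z.2
    have hzne : (z : ℕ) ≠ k - 1 := fun h => hzx (Fin.ext (by simp [hxdef, h]))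
    have hzlt : (z : ℕ) < k - 1 := by omega
    have hze : emb ⟨(z : ℕ), hzlt⟩ = z := Fin.ext rfl
    exact hz2 ⟨(z : ℕ), hzlt⟩ (by rw [hze]; exact (P (f _)).mem_part (Finset.mem_univ _))
  · rintro rfl
    refine Finset.mem_sdiff.mpr ⟨Finset.mem_univ _, fun hmem => ?_⟩
    obtain ⟨j, _, hj⟩ := Finset.mem_biUnion.mp hmem
    exact hxA j hj

end SGPaper
end
end

section
/- Let f_1,...,f_m be multiplication terms in R = F[x_1,...,x_n] generating an ideal I, let ℓ be a linear form with ℓ ∉ radsp(f_1,...,f_m), and let g ∈ R. Then ℓ·g ∈ I if and only if g ∈ I. -/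
open MvPolynomial

noncomputable section

namespace SGPaper

variable {F : Type*}

section NZD

variable [Field F] {n : ℕ}

private def sgee (i : Fin n) : Fin n → F := fun j => if i = j then 1 else 0

/-- The coaction `Φ : x_i ↦ (x_i - λ(e_i)·ℓ) + λ(e_i)·ℓ·t`. -/
private def sgPhi (L : (Fin n → F) →ₗ[F] F) (w : Fin n → F) :
    MvPolynomial (Fin n) F →+* Polynomial (MvPolynomial (Fin n) F) :=
  MvPolynomial.eval₂Hom (Polynomial.C.comp MvPolynomial.C)
    (fun i => Polynomial.C (MvPolynomial.X i - MvPolynomial.C (L (sgee i)) * toForm w) +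
      Polynomial.C (MvPolynomial.C (L (sgee i)) * toForm w) * Polynomial.X)

private lemma sgPhi_C (L : (Fin n → F) →ₗ[F] F) (w : Fin n → F) (a : F) :
    sgPhi L w (MvPolynomial.C a) = Polynomial.C (MvPolynomial.C a) := by
  simp [sgPhi]

private lemma sgPhi_X (L : (Fin n → F) →ₗ[F] F) (w : Fin n → F) (i : Fin n) :
    sgPhi L w (MvPolynomial.X i) =
      Polynomial.C (MvPolynomial.X i - MvPolynomial.C (L (sgee i)) * toForm w) +
        Polynomial.C (MvPolynomial.C (L (sgee i)) * toForm w) * Polynomial.X := by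
  simp [sgPhi]

private lemma sgPhi_toForm (L : (Fin n → F) →ₗ[F] F) (w : Fin n → F) (v : Fin n → F) :
    sgPhi L w (toForm v) =
      Polynomial.C (toForm v - MvPolynomial.C (L v) * toForm w) +
        Polynomial.C (MvPolynomial.C (L v) * toForm w) * Polynomial.X := by
  have hLv : (MvPolynomial.C (L v) : MvPolynomial (Fin n) F) =
      ∑ i, MvPolynomial.C (v i) * MvPolynomial.C (L (sgee i)) := by
    rw [show L v = ∑ i, v i * L (sgee i) from by
      have := LinearMap.pi_apply_eq_sum_univ L v; simp only [smul_eq_mul] at this; exact this]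
    rw [map_sum]
    simp [map_mul]
  calc sgPhi L w (toForm v)
      = ∑ x, (Polynomial.C (MvPolynomial.C (v x) * MvPolynomial.X x
            - MvPolynomial.C (v x) * MvPolynomial.C (L (sgee x)) * toForm w) +
          Polynomial.C (MvPolynomial.C (v x) * MvPolynomial.C (L (sgee x)) * toForm w) *
            Polynomial.X) := by
        rw [toForm, map_sum]
        refine Finset.sum_congr rfl fun x _ => ?_
        rw [map_mul, sgPhi_C, sgPhi_X, mul_add, ← Polynomial.C_mul, ← mul_assoc,
          ← Polynomial.C_mul, mul_sub, mul_assoc]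
    _ = Polynomial.C (∑ x, (MvPolynomial.C (v x) * MvPolynomial.X x
            - MvPolynomial.C (v x) * MvPolynomial.C (L (sgee x)) * toForm w)) +
        Polynomial.C (∑ x, MvPolynomial.C (v x) * MvPolynomial.C (L (sgee x)) * toForm w) *
          Polynomial.X := by
        rw [Finset.sum_add_distrib, ← map_sum, ← Finset.sum_mul, ← map_sum]
    _ = Polynomial.C (toForm v - MvPolynomial.C (L v) * toForm w) +
        Polynomial.C (MvPolynomial.C (L v) * toForm w) * Polynomial.X := by
        rw [Finset.sum_sub_distrib, ← Finset.sum_mul, ← hLv, ← toForm]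

private lemma sgPhi_toForm_ker (L : (Fin n → F) →ₗ[F] F) (w : Fin n → F) {v : Fin n → F}
    (hv : L v = 0) : sgPhi L w (toForm v) = Polynomial.C (toForm v) := by
  simp [sgPhi_toForm, hv]

private lemma sgPhi_ell (L : (Fin n → F) →ₗ[F] F) {w : Fin n → F} (hw : L w = 1) :
    sgPhi L w (toForm w) = Polynomial.C (toForm w) * Polynomial.X := by
  simp [sgPhi_toForm, hw]

private lemma sgPhi_mTerm (L : (Fin n → F) →ₗ[F] F) (w : Fin n → F) (a : F)
    (T : Multiset (Fin n → F)) (hT : ∀ v ∈ T, L v = 0) :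
    sgPhi L w (mTerm a T) = Polynomial.C (mTerm a T) := by
  rw [mTerm, map_mul, sgPhi_C, map_multiset_prod, Multiset.map_map]
  have hmc := Multiset.map_congr (f := ⇑(sgPhi L w) ∘ toForm)
    (g := ⇑(Polynomial.C : MvPolynomial (Fin n) F →+* Polynomial (MvPolynomial (Fin n) F)) ∘ toForm)
    (rfl : T = T) (fun v hv => sgPhi_toForm_ker L w (hT v hv))
  rw [hmc, ← Multiset.map_map, ← map_multiset_prod, ← map_mul]

private lemma coeff_eval₂_CXX {R : Type*} [CommSemiring R] (p : Polynomial R) (k : ℕ) :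
    (Polynomial.eval₂ ((Polynomial.C).comp (Polynomial.C))
        (Polynomial.C Polynomial.X * Polynomial.X) p).coeff k =
      Polynomial.C (p.coeff k) * Polynomial.X ^ k := by
  induction p using Polynomial.induction_on' with
  | add p q hp hq => rw [Polynomial.eval₂_add, Polynomial.coeff_add, hp, hq,
      Polynomial.coeff_add, map_add, add_mul]
  | monomial j a =>
    rw [Polynomial.eval₂_monomial, mul_pow, ← Polynomial.C_pow, RingHom.coe_comp,
      Function.comp_apply, ← mul_assoc, ← Polynomial.C_mul, Polynomial.coeff_C_mul,
      Polynomial.coeff_X_pow, Polynomial.coeff_monomial]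
    split_ifs with h1 h2 h2
    · subst h2; simp
    · exact absurd h1.symm h2
    · exact absurd h2.symm h1
    · simp

private lemma sgPhi_coassoc (L : (Fin n → F) →ₗ[F] F) {w : Fin n → F} (hw : L w = 1) :
    (Polynomial.mapRingHom (sgPhi L w)).comp (sgPhi L w) =
      (Polynomial.eval₂RingHom
        (S := Polynomial (Polynomial (MvPolynomial (Fin n) F)))
        ((Polynomial.C).comp (Polynomial.C))
        (Polynomial.C Polynomial.X * Polynomial.X)).comp (sgPhi L w) := by
  apply MvPolynomial.ringHom_ext
  · intro r
    simp [sgPhi_C]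
  · intro i
    have h1 : sgPhi L w (MvPolynomial.X i - MvPolynomial.C (L (sgee i)) * toForm w) =
        Polynomial.C (MvPolynomial.X i - MvPolynomial.C (L (sgee i)) * toForm w) := by
      rw [map_sub, map_mul, sgPhi_C, sgPhi_X, sgPhi_ell L hw, ← mul_assoc, ← Polynomial.C_mul,
        map_sub, add_sub_assoc, sub_self, add_zero]
    have h2 : sgPhi L w (MvPolynomial.C (L (sgee i)) * toForm w) =
        Polynomial.C (MvPolynomial.C (L (sgee i)) * toForm w) * Polynomial.X := by
      rw [map_mul, sgPhi_C, sgPhi_ell L hw, ← mul_assoc, ← Polynomial.C_mul]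
    rw [RingHom.comp_apply, RingHom.comp_apply, sgPhi_X, Polynomial.coe_mapRingHom,
      Polynomial.coe_eval₂RingHom, Polynomial.map_add, Polynomial.map_mul, Polynomial.map_C,
      Polynomial.map_C, Polynomial.map_X, Polynomial.eval₂_add, Polynomial.eval₂_mul_X,
      Polynomial.eval₂_C, Polynomial.eval₂_C, h1, h2]
    simp only [RingHom.coe_comp, Function.comp_apply, Polynomial.C_mul, mul_assoc]

private lemma sgPhi_coeff_pure (L : (Fin n → F) →ₗ[F] F) {w : Fin n → F} (hw : L w = 1)
    (p : MvPolynomial (Fin n) F) (k : ℕ) :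
    sgPhi L w ((sgPhi L w p).coeff k) =
      Polynomial.C ((sgPhi L w p).coeff k) * Polynomial.X ^ k := by
  have h := congrArg (fun q => Polynomial.coeff q k) (RingHom.congr_fun (sgPhi_coassoc L hw) p)
  simpa [Polynomial.coeff_map, coeff_eval₂_CXX] using h

private lemma sgdvd_of_coeff_zero_eq_zero (L : (Fin n → F) →ₗ[F] F) (w : Fin n → F)
    (h : MvPolynomial (Fin n) F) (h0 : (sgPhi L w h).coeff 0 = 0) : toForm w ∣ h := by
  set q := Ideal.Quotient.mk (Ideal.span {toForm w}) with hq
  have key : q.comp ((Polynomial.evalRingHom (0 : MvPolynomial (Fin n) F)).comp (sgPhi L w))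
      = q := by
    apply MvPolynomial.ringHom_ext
    · intro r
      simp [sgPhi_C]
    · intro i
      rw [RingHom.comp_apply, RingHom.comp_apply, sgPhi_X]
      have e0 : (Polynomial.evalRingHom (0 : MvPolynomial (Fin n) F))
          (Polynomial.C (MvPolynomial.X i - MvPolynomial.C (L (sgee i)) * toForm w) +
            Polynomial.C (MvPolynomial.C (L (sgee i)) * toForm w) * Polynomial.X)
          = MvPolynomial.X i - MvPolynomial.C (L (sgee i)) * toForm w := by
        simp
      rw [e0, RingHom.map_sub]
      have hz : q (MvPolynomial.C (L (sgee i)) * toForm w) = 0 :=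
        Ideal.Quotient.eq_zero_iff_mem.mpr (Ideal.mem_span_singleton.mpr (dvd_mul_left _ _))
      rw [hz, sub_zero]
  have hk := RingHom.congr_fun key h
  rw [RingHom.comp_apply, RingHom.comp_apply, Polynomial.coe_evalRingHom,
    ← Polynomial.coeff_zero_eq_eval_zero, h0, map_zero] at hk
  rw [← Ideal.mem_span_singleton]
  rw [← Ideal.Quotient.eq_zero_iff_mem]
  exact hk.symm

private lemma sgPhi_eval_one (L : (Fin n → F) →ₗ[F] F) (w : Fin n → F)
    (p : MvPolynomial (Fin n) F) : (sgPhi L w p).eval 1 = p := by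
  have key : (Polynomial.evalRingHom (1 : MvPolynomial (Fin n) F)).comp (sgPhi L w)
      = RingHom.id _ := by
    apply MvPolynomial.ringHom_ext
    · intro r
      simp [sgPhi_C]
    · intro i
      simp [sgPhi_X]
  exact RingHom.congr_fun key p

private lemma sgcoeff_mem_ideal {m : ℕ} (L : (Fin n → F) →ₗ[F] F) (w : Fin n → F)
    (f : Fin m → MvPolynomial (Fin n) F)
    (hf : ∀ i, sgPhi L w (f i) = Polynomial.C (f i)) {p : MvPolynomial (Fin n) F}
    (hp : p ∈ Ideal.span (Set.range f)) (k : ℕ) :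
    (sgPhi L w p).coeff k ∈ Ideal.span (Set.range f) := by
  revert k
  refine Submodule.span_induction ?_ ?_ ?_ ?_ hp
  · rintro x ⟨i, rfl⟩ k
    rw [hf i, Polynomial.coeff_C]
    split_ifs
    · exact Ideal.subset_span ⟨i, rfl⟩
    · exact Ideal.zero_mem _
  · intro k
    simp
  · intro x y _ _ hx hy k
    rw [map_add, Polynomial.coeff_add]
    exact Ideal.add_mem _ (hx k) (hy k)
  · intro a x _ hx k
    rw [smul_eq_mul, map_mul, Polynomial.coeff_mul]
    exact Ideal.sum_mem _ fun ij _ => Ideal.mul_mem_left _ _ (hx ij.2)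

private lemma sgkey_cancel {m : ℕ} (L : (Fin n → F) →ₗ[F] F) {w : Fin n → F} (hw : L w = 1)
    (f : Fin m → MvPolynomial (Fin n) F)
    (hf : ∀ i, sgPhi L w (f i) = Polynomial.C (f i))
    (g : MvPolynomial (Fin n) F)
    (hg : toForm w * g ∈ Ideal.span (Set.range f)) : g ∈ Ideal.span (Set.range f) := by
  set I := Ideal.span (Set.range f) with hIdef
  have hw0 : w ≠ 0 := by
    intro h
    rw [h, map_zero] at hw
    exact one_ne_zero hw.symm
  have hl0 : toForm w ≠ 0 := by
    intro h
    apply hw0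
    funext i
    have := congrArg (MvPolynomial.eval (fun j => if j = i then (1 : F) else 0)) h
    simpa [toForm, map_sum, Finset.sum_ite_eq] using this
  suffices hsuff : ∀ k, (sgPhi L w g).coeff k ∈ I by
    have hev := sgPhi_eval_one L w g
    rw [Polynomial.eval_eq_sum_range] at hev
    rw [← hev]
    exact Ideal.sum_mem _ fun i _ => by simpa using hsuff i
  intro k
  have hpure : sgPhi L w ((sgPhi L w g).coeff k)
      = Polynomial.C ((sgPhi L w g).coeff k) * Polynomial.X ^ k := sgPhi_coeff_pure L hw g k
  set gk := (sgPhi L w g).coeff k with hgkdef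
  have hlgk : toForm w * gk ∈ I := by
    have hcm := sgcoeff_mem_ideal L w f hf hg (k + 1)
    rwa [map_mul, sgPhi_ell L hw, mul_assoc, Polynomial.coeff_C_mul,
      Polynomial.coeff_X_mul] at hcm
  obtain ⟨h, hh⟩ := Ideal.mem_span_range_iff_exists_fun.mp hlgk
  have hsum : toForm w * gk = ∑ i, (sgPhi L w (h i)).coeff (k + 1) * f i := by
    have hc := congrArg (fun q => Polynomial.coeff q (k + 1)) (congrArg (sgPhi L w) hh)
    simp only [map_sum, map_mul, hf, Polynomial.finset_sum_coeff,
      Polynomial.coeff_mul_C] at hc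
    rw [sgPhi_ell L hw, hpure] at hc
    have hx : Polynomial.C (toForm w) * Polynomial.X *
        (Polynomial.C gk * Polynomial.X ^ k) =
        Polynomial.C (toForm w * gk) * Polynomial.X ^ (k + 1) := by
      rw [Polynomial.C_mul]
      ring
    rw [hx, Polynomial.coeff_C_mul, Polynomial.coeff_X_pow, if_pos rfl, mul_one] at hc
    exact hc.symm
  have hdvd : ∀ i, toForm w ∣ (sgPhi L w (h i)).coeff (k + 1) := by
    intro i
    apply sgdvd_of_coeff_zero_eq_zero L w
    rw [sgPhi_coeff_pure L hw, Polynomial.coeff_C_mul, Polynomial.coeff_X_pow]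
    simp
  choose h' hh' using hdvd
  have hfin : toForm w * gk = toForm w * ∑ i, h' i * f i := by
    rw [hsum, Finset.mul_sum]
    exact Finset.sum_congr rfl fun i _ => by rw [hh' i, mul_assoc]
  have hgkI : gk = ∑ i, h' i * f i := mul_left_cancel₀ hl0 hfin
  rw [hgkI]
  exact Ideal.sum_mem _ fun i _ => Ideal.mul_mem_left _ _ (Ideal.subset_span ⟨i, rfl⟩)

end NZD

/-- **Non-zerodivisor.** If `ℓ ∉ radsp(f_1,...,f_m)` then
`ℓ·g ∈ ⟨f_1,...,f_m⟩ ↔ g ∈ ⟨f_1,...,f_m⟩`. -/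
theorem linear_form_non_zerodivisor {F : Type*} [Field F] {n m : ℕ}
    (c : Fin m → F) (S : Fin m → Multiset (Fin n → F))
    (hc : ∀ i, c i ≠ 0) (hS : ∀ i, ∀ v ∈ S i, v ≠ 0)
    (w : Fin n → F) (hw : w ∉ radsp F (∑ i, S i))
    (g : MvPolynomial (Fin n) F) :
    toForm w * g ∈ Ideal.span (Set.range fun i => mTerm (c i) (S i)) ↔
      g ∈ Ideal.span (Set.range fun i => mTerm (c i) (S i)) := by
  constructor
  · intro hlg
    classical
    have hmkw : (radsp F (∑ i, S i)).mkQ w ≠ 0 := by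
      intro h
      rw [Submodule.mkQ_apply, Submodule.Quotient.mk_eq_zero] at h
      exact hw h
    obtain ⟨φ, hφ⟩ : ∃ φ : Module.Dual F ((Fin n → F) ⧸ radsp F (∑ i, S i)),
        φ ((radsp F (∑ i, S i)).mkQ w) ≠ 0 := by
      by_contra hcon
      push_neg at hcon
      exact hmkw ((Module.forall_dual_apply_eq_zero_iff F _).mp hcon)
    set L : (Fin n → F) →ₗ[F] F :=
      (φ ((radsp F (∑ i, S i)).mkQ w))⁻¹ • (φ.comp (radsp F (∑ i, S i)).mkQ) with hL
    have hLw : L w = 1 := by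
      simp only [hL, LinearMap.smul_apply, LinearMap.comp_apply, smul_eq_mul]
      exact inv_mul_cancel₀ hφ
    have hLK : ∀ i, ∀ v ∈ S i, L v = 0 := by
      intro i v hv
      have hvmem : v ∈ radsp F (∑ i, S i) :=
        Submodule.subset_span (Multiset.mem_sum.mpr ⟨i, Finset.mem_univ i, hv⟩)
      have hmk : (radsp F (∑ i, S i)).mkQ v = 0 := by
        rw [Submodule.mkQ_apply, Submodule.Quotient.mk_eq_zero]
        exact hvmem
      simp [hL, hmk]
    exact sgkey_cancel L hLw _ (fun i => sgPhi_mTerm L w (c i) (S i) (hLK i)) g hlg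
  · intro hg
    exact Ideal.mul_mem_left _ _ hg

end SGPaper
end
end
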